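/- arXiv:1001.0136 — 6 statements merged into one kernel-verified Lean document; each statement's English description precedes it below -/
import Mathlib

section
/- Let G be a threshold graph with self-loops with block sizes k_1,…,k_m, l_1,…,l_m, where additionally k_1 ≥ 1. Set J = 2m−1 and let B̃ be the loop-reduced matrix built from the sequence (a_1,…,a_J) = (k_m, l_{m−1}, k_{m−1}, l_{m−2}, …, l_1, k_1). Then the characteristic polynomial of the adjacency matrix Ã_G equals x^{n − J} · det(x·I_J − B̃), and 0 is not an eigenvalue of B̃. In particular, the eigenvalue 0 of Ã_G has algebraic multiplicity exactly n − (2m−1). -/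
open Finset Polynomial

/-- The adjacency matrix of a threshold graph *with self-loops* determined by a block
assignment `b : Fin n → ℕ × Bool`, where `b u = (i, true)` means `u ∈ V_i^{(1)}` and
`b u = (i, false)` means `u ∈ V_i^{(0)}`.  Two (not necessarily distinct) vertices `u, v`
are adjacent iff (after possibly swapping them) `u` lies in some `V_i^{(1)}` and `v` lies
in some `V_j^{(1)}`, or in some `V_j^{(0)}` with `j < i`; in particular every vertex of a
`V^{(1)}` block carries a self-loop. -/
def thrAdjLoop {n : ℕ} (b : Fin n → ℕ × Bool) : Matrix (Fin n) (Fin n) ℝ :=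
  Matrix.of fun u v =>
    if (((b u).2 = true ∧ ((b v).2 = true ∨ ((b v).2 = false ∧ (b v).1 < (b u).1))) ∨
         ((b v).2 = true ∧ ((b u).2 = true ∨ ((b u).2 = false ∧ (b u).1 < (b v).1))))
    then (1 : ℝ) else 0

/-- The loop-reduced matrix built from a sequence `a_1, …, a_J` (0-indexed here):
`B̃[i,j] = a_j` if (`j` is odd and `j ≤ i`) or (`i` is odd and `i ≤ j`) in 1-based
indexing, and `B̃[i,j] = 0` otherwise. -/
def loopReducedMatrix {J : ℕ} (a : Fin J → ℝ) : Matrix (Fin J) (Fin J) ℝ :=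
  Matrix.of fun i j =>
    if ((j : ℕ) % 2 = 0 ∧ (j : ℕ) ≤ (i : ℕ)) ∨ ((i : ℕ) % 2 = 0 ∧ (i : ℕ) ≤ (j : ℕ))
    then a j else 0

/-- The sequence `(a_1, …, a_J) = (k_m, l_{m-1}, k_{m-1}, l_{m-2}, …)` (1-based),
written 0-indexed: `a j = k (m - j/2)` for even `j` and `a j = l (m - (j+1)/2)` for odd `j`. -/
def aseq (m : ℕ) (k l : ℕ → ℕ) (J : ℕ) : Fin J → ℝ :=
  fun j => if (j : ℕ) % 2 = 0 then (k (m - (j : ℕ) / 2) : ℝ) else (l (m - ((j : ℕ) + 1) / 2) : ℝ)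


def tBlk (m j : ℕ) : ℕ × Bool :=
  if j % 2 = 0 then (m - j / 2, true) else (m - (j + 1) / 2, false)

def adjFun (p q : ℕ × Bool) : ℝ :=
  if ((p.2 = true ∧ (q.2 = true ∨ (q.2 = false ∧ q.1 < p.1))) ∨
      (q.2 = true ∧ (p.2 = true ∨ (p.2 = false ∧ p.1 < q.1)))) then 1 else 0

lemma tBlk_inj (m : ℕ) {i j : ℕ} (hi : i < 2 * m - 1) (hj : j < 2 * m - 1)
    (h : tBlk m i = tBlk m j) : i = j := by
  unfold tBlk at h
  split_ifs at h <;> rw [Prod.mk.injEq] at h <;> simp at h <;> omega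

lemma tBlk_true (m i : ℕ) (h1 : 1 ≤ i) (h2 : i ≤ m) :
    2 * (m - i) < 2 * m - 1 ∧ tBlk m (2 * (m - i)) = (i, true) := by
  refine ⟨by omega, ?_⟩
  unfold tBlk
  rw [if_pos (by omega)]
  rw [Prod.mk.injEq]
  exact ⟨by omega, rfl⟩

lemma tBlk_false (m i : ℕ) (h1 : 1 ≤ i) (h2 : i < m) :
    2 * (m - i) - 1 < 2 * m - 1 ∧ tBlk m (2 * (m - i) - 1) = (i, false) := by
  refine ⟨by omega, ?_⟩
  unfold tBlk
  rw [if_neg (by omega)]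
  rw [Prod.mk.injEq]
  exact ⟨by omega, rfl⟩

lemma adjFun_tBlk (m : ℕ) {i j : ℕ} (hi : i < 2 * m - 1) (hj : j < 2 * m - 1) :
    adjFun (tBlk m i) (tBlk m j) =
      if ((j % 2 = 0 ∧ j ≤ i) ∨ (i % 2 = 0 ∧ i ≤ j)) then 1 else 0 := by
  unfold adjFun tBlk
  by_cases hpi : i % 2 = 0 <;> by_cases hpj : j % 2 = 0 <;>
    simp only [hpi, hpj, if_true, if_false, ite_true, ite_false] <;>
    simp <;> (try split_ifs) <;> first | (exfalso; omega) | omega | norm_num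


def Pmat (J : ℕ) : Matrix (Fin J) (Fin J) ℝ :=
  Matrix.of fun i j =>
    if ((j : ℕ) % 2 = 0 ∧ (j : ℕ) ≤ (i : ℕ)) ∨ ((i : ℕ) % 2 = 0 ∧ (i : ℕ) ≤ (j : ℕ))
    then 1 else 0

def Qmat (J : ℕ) : Matrix (Fin J) (Fin J) ℝ :=
  Matrix.of fun i j =>
    (if (j : ℕ) = (i : ℕ) + 1 then (-1 : ℝ) ^ (i : ℕ) else 0) +
    ((if (i : ℕ) = (j : ℕ) + 1 then (-1 : ℝ) ^ (j : ℕ) else 0) +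
     (if (i : ℕ) = (j : ℕ) ∧ (i : ℕ) = J - 1 then 1 else 0))

lemma sum_ite_coe {J : ℕ} (c : ℕ) (f : Fin J → ℝ) :
    (∑ t : Fin J, if (t : ℕ) = c then f t else 0) =
      if h : c < J then f ⟨c, h⟩ else 0 := by
  split_ifs with h
  · rw [Finset.sum_eq_single (⟨c, h⟩ : Fin J)]
    · simp
    · intro t _ ht
      rw [if_neg]
      simpa [Fin.ext_iff] using ht
    · simp
  · exact Finset.sum_eq_zero fun t _ => if_neg (by have := t.isLt; omega)

lemma Qmat_mul_Pmat (J : ℕ) (hJ : J % 2 = 1) : Qmat J * Pmat J = 1 := by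
  ext i j
  have hi := i.isLt
  have hj := j.isLt
  rw [Matrix.mul_apply]
  have hterm : ∀ t : Fin J, Qmat J i t * Pmat J t j =
      (if (t : ℕ) = (i : ℕ) + 1 then (-1 : ℝ) ^ (i : ℕ) * Pmat J t j else 0) +
      ((if (t : ℕ) = (i : ℕ) - 1 then
          (if 1 ≤ (i : ℕ) then (-1 : ℝ) ^ ((i : ℕ) - 1) * Pmat J t j else 0) else 0) +
       (if (t : ℕ) = (i : ℕ) then
          (if (i : ℕ) = J - 1 then Pmat J t j else 0) else 0)) := by
    intro t
    simp only [Qmat, Matrix.of_apply, add_mul, ite_mul, zero_mul]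
    congr 1
    congr 1
    · by_cases h : (i : ℕ) = (t : ℕ) + 1
      · have ht : (t : ℕ) = (i : ℕ) - 1 := by omega
        rw [if_pos h, if_pos ht, if_pos (by omega), ht]
      · rw [if_neg h]
        by_cases ht : (t : ℕ) = (i : ℕ) - 1
        · rw [if_pos ht, if_neg (by omega)]
        · rw [if_neg ht]
    · by_cases h1 : (t : ℕ) = (i : ℕ)
      · by_cases h2 : (i : ℕ) = J - 1
        · rw [if_pos ⟨h1.symm, h2⟩, if_pos h1, if_pos h2, one_mul]
        · rw [if_neg (by tauto), if_pos h1, if_neg h2]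
      · rw [if_neg (by omega), if_neg h1]
  rw [Finset.sum_congr rfl (fun t _ => hterm t)]
  rw [Finset.sum_add_distrib, Finset.sum_add_distrib, sum_ite_coe, sum_ite_coe, sum_ite_coe]
  rw [dif_pos (show (i : ℕ) - 1 < J by omega), dif_pos (show (i : ℕ) < J from hi)]
  rcases Nat.lt_or_ge ((i : ℕ) + 1) J with hlt | hge
  · rw [dif_pos hlt]
    rcases Nat.eq_zero_or_pos (i : ℕ) with h0 | h1
    · -- i = 0
      rw [if_neg (by omega), if_neg (by omega),
        show (-1 : ℝ) ^ (i : ℕ) = 1 by rw [h0]; norm_num, one_mul]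
      simp only [Pmat, Matrix.of_apply, Matrix.one_apply, Fin.ext_iff]
      split_ifs <;> first | (exfalso; omega) | norm_num
    · rw [if_pos (show 1 ≤ (i : ℕ) by omega), if_neg (by omega)]
      by_cases hp : (i : ℕ) % 2 = 0
      · have e1 : (-1 : ℝ) ^ (i : ℕ) = 1 := Even.neg_one_pow (Nat.even_iff.mpr hp)
        have e2 : (-1 : ℝ) ^ ((i : ℕ) - 1) = -1 :=
          Odd.neg_one_pow (Nat.odd_iff.mpr (by omega))
        rw [e1, e2]
        simp only [Pmat, Matrix.of_apply, Matrix.one_apply, Fin.ext_iff]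
        split_ifs <;> first | (exfalso; omega) | norm_num
      · have e1 : (-1 : ℝ) ^ (i : ℕ) = -1 := Odd.neg_one_pow (Nat.odd_iff.mpr (by omega))
        have e2 : (-1 : ℝ) ^ ((i : ℕ) - 1) = 1 := Even.neg_one_pow (Nat.even_iff.mpr (by omega))
        rw [e1, e2]
        simp only [Pmat, Matrix.of_apply, Matrix.one_apply, Fin.ext_iff]
        split_ifs <;> first | (exfalso; omega) | norm_num
  · -- i = J - 1 (even, since J odd)
    rw [dif_neg (by omega)]
    have hie : (i : ℕ) = J - 1 := by omega
    rcases Nat.eq_zero_or_pos (i : ℕ) with h0 | h1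
    · rw [if_neg (by omega), if_pos hie]
      simp only [Pmat, Matrix.of_apply, Matrix.one_apply, Fin.ext_iff]
      split_ifs <;> first | (exfalso; omega) | norm_num
    · rw [if_pos (show 1 ≤ (i : ℕ) by omega), if_pos hie]
      have e2 : (-1 : ℝ) ^ ((i : ℕ) - 1) = -1 :=
        Odd.neg_one_pow (Nat.odd_iff.mpr (by omega))
      rw [e2]
      simp only [Pmat, Matrix.of_apply, Matrix.one_apply, Fin.ext_iff]
      split_ifs <;> first | (exfalso; omega) | norm_num


lemma charpoly_rect {n J : ℕ} (Cm : Matrix (Fin n) (Fin J) ℝ) (Dm : Matrix (Fin J) (Fin n) ℝ) :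
    X ^ J * (Cm * Dm).charpoly = X ^ n * (Dm * Cm).charpoly := by
  classical
  set C' : Matrix (Fin n) (Fin J) ℝ[X] := Cm.map Polynomial.C with hC'
  set D' : Matrix (Fin J) (Fin n) ℝ[X] := Dm.map Polynomial.C with hD'
  set Dn : Matrix (Fin n) (Fin n) ℝ[X] := Matrix.diagonal fun _ => (X : ℝ[X]) with hDn
  set DJ : Matrix (Fin J) (Fin J) ℝ[X] := Matrix.diagonal fun _ => (X : ℝ[X]) with hDJ
  have hdetn : Dn.det = X ^ n := by
    rw [hDn, Matrix.det_diagonal, Finset.prod_const, Finset.card_univ, Fintype.card_fin]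
  have hdetJ : DJ.det = X ^ J := by
    rw [hDJ, Matrix.det_diagonal, Finset.prod_const, Finset.card_univ, Fintype.card_fin]
  have hcharCD : (Cm * Dm).charmatrix = Dn - C' * D' := by
    rw [hC', hD', ← Matrix.map_mul]
    ext u v
    rw [Matrix.charmatrix_apply, Matrix.sub_apply, Matrix.map_apply]
  have hcharDC : (Dm * Cm).charmatrix = DJ - D' * C' := by
    rw [hD', hC', ← Matrix.map_mul]
    ext u v
    rw [Matrix.charmatrix_apply, Matrix.sub_apply, Matrix.map_apply]
  have hcomm : DJ * D' = D' * Dn := by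
    ext u v
    rw [hDJ, hDn, Matrix.diagonal_mul, Matrix.mul_diagonal, mul_comm]
  have hLM : Matrix.fromBlocks (1 : Matrix (Fin n) (Fin n) ℝ[X]) 0 (-D') DJ *
      Matrix.fromBlocks Dn C' D' 1 = Matrix.fromBlocks Dn C' 0 (DJ - D' * C') := by
    rw [Matrix.fromBlocks_multiply]
    simp only [Matrix.one_mul, Matrix.zero_mul, Matrix.mul_one, Matrix.neg_mul, add_zero,
      zero_add, Matrix.mul_zero]
    rw [hcomm, neg_add_cancel, neg_add_eq_sub]
  have hdet1 : (Matrix.fromBlocks Dn C' D' (1 : Matrix (Fin J) (Fin J) ℝ[X])).det =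
      (Dn - C' * D').det := Matrix.det_fromBlocks_one₂₂ _ _ _
  have hdet2 : (Matrix.fromBlocks (1 : Matrix (Fin n) (Fin n) ℝ[X]) 0 (-D') DJ).det =
      X ^ J := by
    rw [Matrix.det_fromBlocks_zero₁₂, Matrix.det_one, one_mul, hdetJ]
  have hmul := Matrix.det_mul
    (Matrix.fromBlocks (1 : Matrix (Fin n) (Fin n) ℝ[X]) 0 (-D') DJ)
    (Matrix.fromBlocks Dn C' D' 1)
  rw [hLM, Matrix.det_fromBlocks_zero₂₁, hdet2, hdet1, hdetn] at hmul
  calc X ^ J * (Cm * Dm).charpoly = X ^ J * (Dn - C' * D').det := by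
        rw [Matrix.charpoly, hcharCD]
    _ = X ^ n * (DJ - D' * C').det := hmul.symm
    _ = X ^ n * (Dm * Cm).charpoly := by rw [Matrix.charpoly, hcharDC]

/-- for a threshold graph with self-loops with `k_1 ≥ 1`, the characteristic
polynomial of the adjacency matrix factors as `x^{n-J} det(x I - B̃)` where `B̃` is the
loop-reduced matrix of size `J = 2m-1` built from `(k_m, l_{m-1}, …, l_1, k_1)`; moreover
`0` is not an eigenvalue of `B̃`, so the algebraic multiplicity of the eigenvalue `0` of
`Ã_G` is exactly `n - (2m-1)`. -/
theorem thresholdGraphLoops_charpoly_factorization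
    (m n : ℕ) (k l : ℕ → ℕ) (hm : 1 ≤ m)
    (hk : ∀ i, 2 ≤ i → i ≤ m → 1 ≤ k i)
    (hl : ∀ i, 1 ≤ i → i + 1 ≤ m → 1 ≤ l i)
    (hk1 : 1 ≤ k 1)
    (hn : n = ∑ i ∈ Finset.Icc 1 m, (k i + l i))
    (b : Fin n → ℕ × Bool)
    (hb : ∀ v, (b v).1 ∈ Finset.Icc 1 m)
    (hcard1 : ∀ i ∈ Finset.Icc 1 m,
      (Finset.univ.filter fun v => b v = (i, true)).card = k i)
    (hcard0 : ∀ i ∈ Finset.Icc 1 m,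
      (Finset.univ.filter fun v => b v = (i, false)).card = l i) :
    (thrAdjLoop b).charpoly =
        X ^ (n - (2 * m - 1)) *
        (loopReducedMatrix (aseq m k l (2 * m - 1))).charpoly ∧
    ¬ (loopReducedMatrix (aseq m k l (2 * m - 1))).charpoly.IsRoot 0 ∧
    ((thrAdjLoop b).charpoly.rootMultiplicity 0 = n - (2 * m - 1)) := by
  classical
  have hJ1 : (2 * m - 1) % 2 = 1 := by omega
  -- the two rectangular matrices
  set Cm : Matrix (Fin n) (Fin (2 * m - 1)) ℝ :=
    Matrix.of (fun u j => if b u = tBlk m (j : ℕ) then 1 else 0) with hCm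
  set Dm : Matrix (Fin (2 * m - 1)) (Fin n) ℝ :=
    Matrix.of (fun j v => adjFun (tBlk m (j : ℕ)) (b v)) with hDm
  -- A = Cm * Dm
  have hA : thrAdjLoop b = Cm * Dm := by
    ext u v
    rw [Matrix.mul_apply]
    by_cases hu : b u = (m, false)
    · have hz : ∀ t : Fin (2 * m - 1), Cm u t * Dm t v = 0 := by
        intro t
        have hne : b u ≠ tBlk m (t : ℕ) := by
          intro h
          have ht := t.isLt
          rw [hu] at h
          unfold tBlk at h
          split_ifs at h <;> rw [Prod.mk.injEq] at h <;> simp at h <;> omega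
        simp [hCm, hne]
      rw [Finset.sum_eq_zero (fun t _ => hz t)]
      have hbv := hb v
      rw [Finset.mem_Icc] at hbv
      symm
      unfold thrAdjLoop
      rw [Matrix.of_apply, if_neg]
      rintro (⟨h1, -⟩ | ⟨-, (h2 | ⟨-, h3⟩)⟩)
      · rw [hu] at h1; simp at h1
      · rw [hu] at h2; simp at h2
      · rw [hu] at h3; simp at h3; omega
    · have hbu := hb u
      rw [Finset.mem_Icc] at hbu
      obtain ⟨c, hc1, hc2⟩ : ∃ c, c < 2 * m - 1 ∧ tBlk m c = b u := by
        rcases hsnd : (b u).2 with _ | _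
        · have hlt : (b u).1 < m := by
            rcases Nat.lt_or_ge (b u).1 m with h | h
            · exact h
            · exfalso
              apply hu
              rw [← Prod.mk.eta (p := b u), hsnd]
              rw [Prod.mk.injEq]
              exact ⟨by omega, rfl⟩
          refine ⟨2 * (m - (b u).1) - 1, (tBlk_false m _ hbu.1 hlt).1, ?_⟩
          rw [(tBlk_false m _ hbu.1 hlt).2, ← hsnd, Prod.mk.eta]
        · refine ⟨2 * (m - (b u).1), (tBlk_true m _ hbu.1 hbu.2).1, ?_⟩
          rw [(tBlk_true m _ hbu.1 hbu.2).2, ← hsnd, Prod.mk.eta]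
      rw [Finset.sum_eq_single (⟨c, hc1⟩ : Fin (2 * m - 1))]
      · have : Cm u ⟨c, hc1⟩ = 1 := by simp [hCm, hc2.symm]
        rw [this, one_mul, hDm]
        show thrAdjLoop b u v = adjFun (tBlk m c) (b v)
        rw [hc2]
        rfl
      · intro t _ htne
        have hne : b u ≠ tBlk m (t : ℕ) := by
          intro h
          apply htne
          have := tBlk_inj m t.isLt hc1 (hc2 ▸ h.symm)
          exact Fin.ext this
        simp [hCm, hne]
      · intro h
        exact absurd (Finset.mem_univ _) h
  -- Dm * Cm = the loop-reduced matrix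
  have hDC : Dm * Cm = loopReducedMatrix (aseq m k l (2 * m - 1)) := by
    ext i j
    rw [Matrix.mul_apply]
    have hstep : ∀ v, Dm i v * Cm v j =
        if b v = tBlk m (j : ℕ) then adjFun (tBlk m (i : ℕ)) (tBlk m (j : ℕ)) else 0 := by
      intro v
      by_cases h : b v = tBlk m (j : ℕ)
      · simp [hDm, hCm, h]
      · simp [hDm, hCm, h]
    rw [Finset.sum_congr rfl (fun v _ => hstep v), ← Finset.sum_filter,
      Finset.sum_const, nsmul_eq_mul]
    have hi := i.isLt
    have hj := j.isLt
    rw [adjFun_tBlk m hi hj]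
    by_cases hpj : (j : ℕ) % 2 = 0
    · have ht : tBlk m (j : ℕ) = (m - (j : ℕ) / 2, true) := by
        unfold tBlk; rw [if_pos hpj]
      have hcard := hcard1 (m - (j : ℕ) / 2) (Finset.mem_Icc.mpr ⟨by omega, by omega⟩)
      rw [ht, hcard]
      simp only [loopReducedMatrix, Matrix.of_apply, aseq, hpj, if_true, ite_true]
      split_ifs <;> norm_num
    · have ht : tBlk m (j : ℕ) = (m - ((j : ℕ) + 1) / 2, false) := by
        unfold tBlk; rw [if_neg hpj]
      have hcard := hcard0 (m - ((j : ℕ) + 1) / 2)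
        (Finset.mem_Icc.mpr ⟨by omega, by omega⟩)
      rw [ht, hcard]
      simp only [loopReducedMatrix, Matrix.of_apply, aseq, hpj, if_false, ite_false]
      split_ifs <;> norm_num
  -- J ≤ n
  have hJn : 2 * m - 1 ≤ n := by
    have h1 : ∀ i ∈ Finset.Icc 1 m, 1 ≤ k i := by
      intro i hi
      rw [Finset.mem_Icc] at hi
      rcases Nat.lt_or_ge i 2 with h | h
      · have : i = 1 := by omega
        rw [this]; exact hk1
      · exact hk i h hi.2
    have hk' : m ≤ ∑ i ∈ Finset.Icc 1 m, k i := by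
      calc m = ∑ _i ∈ Finset.Icc 1 m, 1 := by
              rw [Finset.sum_const, smul_eq_mul, mul_one, Nat.card_Icc]; omega
        _ ≤ ∑ i ∈ Finset.Icc 1 m, k i := Finset.sum_le_sum h1
    have hl' : m - 1 ≤ ∑ i ∈ Finset.Icc 1 m, l i := by
      calc m - 1 = ∑ _i ∈ Finset.Icc 1 (m - 1), 1 := by
              rw [Finset.sum_const, smul_eq_mul, mul_one, Nat.card_Icc]; omega
        _ ≤ ∑ i ∈ Finset.Icc 1 (m - 1), l i :=
              Finset.sum_le_sum (fun i hi => by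
                rw [Finset.mem_Icc] at hi
                exact hl i hi.1 (by omega))
        _ ≤ ∑ i ∈ Finset.Icc 1 m, l i :=
              Finset.sum_le_sum_of_subset (Finset.Icc_subset_Icc_right (by omega))
    have : ∑ i ∈ Finset.Icc 1 m, (k i + l i)
        = (∑ i ∈ Finset.Icc 1 m, k i) + ∑ i ∈ Finset.Icc 1 m, l i :=
      Finset.sum_add_distrib
    omega
  -- the factorization
  have key := charpoly_rect Cm Dm
  rw [← hA, hDC] at key
  have hfac : (thrAdjLoop b).charpoly =
      X ^ (n - (2 * m - 1)) * (loopReducedMatrix (aseq m k l (2 * m - 1))).charpoly := by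
    have hXJ : (X : ℝ[X]) ^ (2 * m - 1) ≠ 0 := pow_ne_zero _ X_ne_zero
    apply mul_left_cancel₀ hXJ
    rw [key, ← mul_assoc, ← pow_add]
    congr 2
    omega
  -- nonvanishing of det
  have hdet : (loopReducedMatrix (aseq m k l (2 * m - 1))).det ≠ 0 := by
    have hPD : loopReducedMatrix (aseq m k l (2 * m - 1)) =
        Pmat (2 * m - 1) * Matrix.diagonal (aseq m k l (2 * m - 1)) := by
      ext i j
      rw [Matrix.mul_diagonal]
      simp only [loopReducedMatrix, Pmat, Matrix.of_apply]
      split_ifs <;> norm_num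
    rw [hPD, Matrix.det_mul, Matrix.det_diagonal]
    apply mul_ne_zero
    · have hQP := congrArg Matrix.det (Qmat_mul_Pmat (2 * m - 1) hJ1)
      rw [Matrix.det_mul, Matrix.det_one] at hQP
      intro h
      rw [h, mul_zero] at hQP
      exact absurd hQP.symm one_ne_zero
    · rw [Finset.prod_ne_zero_iff]
      intro j _
      have hj := j.isLt
      unfold aseq
      by_cases hpj : (j : ℕ) % 2 = 0
      · rw [if_pos hpj]
        have : 1 ≤ k (m - (j : ℕ) / 2) := by
          by_cases h1 : m - (j : ℕ) / 2 = 1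
          · rw [h1]; exact hk1
          · exact hk _ (by omega) (by omega)
        positivity
      · rw [if_neg hpj]
        have : 1 ≤ l (m - ((j : ℕ) + 1) / 2) := hl _ (by omega) (by omega)
        positivity
  have hroot : ¬ (loopReducedMatrix (aseq m k l (2 * m - 1))).charpoly.IsRoot 0 := by
    intro h
    apply hdet
    rw [Matrix.det_eq_sign_charpoly_coeff, Polynomial.coeff_zero_eq_eval_zero, h, mul_zero]
  refine ⟨hfac, hroot, ?_⟩
  rw [hfac, Polynomial.rootMultiplicity_mul
    (mul_ne_zero (pow_ne_zero _ X_ne_zero)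
      (Matrix.charpoly_monic _).ne_zero)]
  rw [Polynomial.rootMultiplicity_eq_zero hroot, add_zero]
  have : (X : ℝ[X]) ^ (n - (2 * m - 1)) = (X - Polynomial.C (0 : ℝ)) ^ (n - (2 * m - 1)) := by
    rw [Polynomial.C_0, sub_zero]
  rw [this, Polynomial.rootMultiplicity_X_sub_C_pow]
end

section
/- Let G be a threshold graph with self-loops with block sizes k_1,…,k_m, l_1,…,l_m, where additionally m ≥ 2 and k_1 = 0. Set J = 2m−2 and let B̃ be the loop-reduced matrix built from the sequence (a_1,…,a_J) = (k_m, l_{m−1}, k_{m−1}, l_{m−2}, …, k_2, l_1). Then the characteristic polynomial of the adjacency matrix Ã_G equals x^{n − J} · det(x·I_J − B̃), and 0 is not an eigenvalue of B̃. In particular, the eigenvalue 0 of Ã_G has algebraic multiplicity exactly n − (2m−2). -/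
open Finset Polynomial

lemma charpoly_mul_X_pow {p q : ℕ} (A : Matrix (Fin p) (Fin q) ℝ) (B : Matrix (Fin q) (Fin p) ℝ) :
    (A * B).charpoly * X ^ q = X ^ p * (B * A).charpoly := by
  have hinj : Function.Injective (algebraMap ℝ[X] (FractionRing ℝ[X])) :=
    IsFractionRing.injective _ _
  apply hinj
  set φ := algebraMap ℝ[X] (FractionRing ℝ[X]) with hφ
  set x : FractionRing ℝ[X] := φ X with hxdef
  have hx : x ≠ 0 := by
    intro h
    exact Polynomial.X_ne_zero (R := ℝ) (hinj (by simpa using h))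
  set ψ : ℝ →+* FractionRing ℝ[X] := φ.comp (Polynomial.C : ℝ →+* ℝ[X]) with hψ
  have key : ∀ {r : ℕ} (M : Matrix (Fin r) (Fin r) ℝ),
      φ M.charpoly = (x • (1 : Matrix (Fin r) (Fin r) (FractionRing ℝ[X])) - M.map ψ).det := by
    intro r M
    rw [Matrix.charpoly, RingHom.map_det]
    congr 1
    ext i j
    by_cases h : i = j
    · subst h
      simp [Matrix.charmatrix_apply_eq, hψ, Matrix.smul_apply, Matrix.one_apply_eq, map_sub, hxdef]
    · simp [Matrix.charmatrix_apply_ne _ _ _ h, Matrix.one_apply_ne h, hψ, h]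
  have key2 : ∀ {r s : ℕ} (P : Matrix (Fin r) (Fin s) ℝ) (Q : Matrix (Fin s) (Fin r) ℝ),
      φ (P * Q).charpoly = x ^ r * (1 - x⁻¹ • (P.map ψ * Q.map ψ)).det := by
    intro r s P Q
    rw [key, Matrix.map_mul]
    have h2 : x • (1 : Matrix (Fin r) (Fin r) (FractionRing ℝ[X])) - P.map ψ * Q.map ψ
        = x • ((1 : Matrix (Fin r) (Fin r) (FractionRing ℝ[X])) - x⁻¹ • (P.map ψ * Q.map ψ)) := by
      rw [smul_sub, smul_smul, mul_inv_cancel₀ hx, one_smul]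
    rw [h2, Matrix.det_smul]
    simp
  rw [map_mul, map_mul, map_pow, map_pow, key2 A B, key2 B A]
  have h3 : (1 - x⁻¹ • (A.map ψ * B.map ψ)).det
      = (1 - x⁻¹ • (B.map ψ * A.map ψ)).det := by
    rw [← Matrix.smul_mul, Matrix.det_one_sub_mul_comm, Matrix.mul_smul]
  rw [h3, ← hxdef]
  ring

lemma charpoly_factor {p q : ℕ} (hqp : q ≤ p) (A : Matrix (Fin p) (Fin q) ℝ)
    (B : Matrix (Fin q) (Fin p) ℝ) :
    (A * B).charpoly = X ^ (p - q) * (B * A).charpoly := by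
  have h := charpoly_mul_X_pow A B
  have hq : (X : ℝ[X]) ^ q ≠ 0 := pow_ne_zero _ X_ne_zero
  apply mul_right_cancel₀ hq
  have hp : (X : ℝ[X]) ^ p = X ^ (p - q) * X ^ q := by
    rw [← pow_add, Nat.sub_add_cancel hqp]
  rw [h, hp]
  ring

lemma loopReduced_det_ne_zero {J : ℕ} (hJ : J % 2 = 0) (a : Fin J → ℝ)
    (ha : ∀ j, 0 < a j) : (loopReducedMatrix a).det ≠ 0 := by
  intro hdet
  obtain ⟨v, hv0, hv⟩ := (Matrix.exists_mulVec_eq_zero_iff).2 hdet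
  -- row equations
  have hrow : ∀ i : Fin J, ∑ q : Fin J, loopReducedMatrix a i q * v q = 0 := by
    intro i
    have := congrFun hv i
    simpa [Matrix.mulVec, dotProduct] using this
  have heven : ∀ t : ℕ, ∀ j : Fin J, (j : ℕ) = t → (j : ℕ) % 2 = 0 → v j = 0 := by
    intro t
    induction t using Nat.strong_induction_on with
    | _ t IH =>
      intro j hjt hj2
      have hjJ : (j : ℕ) < J := j.isLt
      have hj1 : (j : ℕ) + 1 < J := by omega
      have hr := hrow ⟨(j : ℕ) + 1, hj1⟩
      rw [Finset.sum_eq_single j] at hr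
      · have hMij : loopReducedMatrix a ⟨(j : ℕ) + 1, hj1⟩ j = a j := by
          simp only [loopReducedMatrix, Matrix.of_apply]
          rw [if_pos]
          left; exact ⟨hj2, by omega⟩
        rw [hMij] at hr
        exact (mul_eq_zero.1 hr).resolve_left (ne_of_gt (ha j))
      · intro q _ hq
        by_cases hc : ((q : ℕ) % 2 = 0 ∧ (q : ℕ) ≤ (j : ℕ) + 1) ∨
            (((j : ℕ) + 1) % 2 = 0 ∧ (j : ℕ) + 1 ≤ (q : ℕ))
        · have hq2 : (q : ℕ) % 2 = 0 ∧ (q : ℕ) < (j : ℕ) := by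
            have : (q : ℕ) ≠ (j : ℕ) := fun h => hq (Fin.ext h)
            omega
          rw [IH (q : ℕ) (by omega) q rfl hq2.1, mul_zero]
        · simp only [loopReducedMatrix, Matrix.of_apply]
          rw [if_neg hc, zero_mul]
      · intro h; exact absurd (Finset.mem_univ _) h
  have hodd : ∀ t : ℕ, ∀ j : Fin J, J - (j : ℕ) = t → (j : ℕ) % 2 = 1 → v j = 0 := by
    intro t
    induction t using Nat.strong_induction_on with
    | _ t IH =>
      intro j hjt hj2
      have hjJ : (j : ℕ) < J := j.isLt
      have hj1 : (j : ℕ) - 1 < J := by omega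
      have hr := hrow ⟨(j : ℕ) - 1, hj1⟩
      rw [Finset.sum_eq_single j] at hr
      · have hMij : loopReducedMatrix a ⟨(j : ℕ) - 1, hj1⟩ j = a j := by
          simp only [loopReducedMatrix, Matrix.of_apply]
          rw [if_pos]
          right; exact ⟨by omega, by omega⟩
        rw [hMij] at hr
        exact (mul_eq_zero.1 hr).resolve_left (ne_of_gt (ha j))
      · intro q _ hq
        by_cases hc : ((q : ℕ) % 2 = 0 ∧ (q : ℕ) ≤ (j : ℕ) - 1) ∨
            (((j : ℕ) - 1) % 2 = 0 ∧ (j : ℕ) - 1 ≤ (q : ℕ))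
        · rcases Nat.mod_two_eq_zero_or_one (q : ℕ) with hq2 | hq2
          · rw [heven (q : ℕ) q rfl hq2, mul_zero]
          · have hqgt : (j : ℕ) < (q : ℕ) := by
              have : (q : ℕ) ≠ (j : ℕ) := fun h => hq (Fin.ext h)
              omega
            rw [IH (J - (q : ℕ)) (by omega) q rfl hq2, mul_zero]
        · simp only [loopReducedMatrix, Matrix.of_apply]
          rw [if_neg hc, zero_mul]
      · intro h; exact absurd (Finset.mem_univ _) h
  apply hv0
  funext j
  rcases Nat.mod_two_eq_zero_or_one (j : ℕ) with h2 | h2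
  · exact heven (j : ℕ) j rfl h2
  · exact hodd (J - (j : ℕ)) j rfl h2

def adjP (p q : ℕ × Bool) : Prop :=
  (p.2 = true ∧ (q.2 = true ∨ (q.2 = false ∧ q.1 < p.1))) ∨
  (q.2 = true ∧ (p.2 = true ∨ (p.2 = false ∧ p.1 < q.1)))

instance (p q : ℕ × Bool) : Decidable (adjP p q) := by unfold adjP; infer_instance

lemma thrAdjLoop_apply {n : ℕ} (b : Fin n → ℕ × Bool) (u v : Fin n) :
    thrAdjLoop b u v = if adjP (b u) (b v) then (1 : ℝ) else 0 := by
  by_cases h : adjP (b u) (b v)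
  · rw [if_pos h]
    unfold adjP at h
    simp only [thrAdjLoop, Matrix.of_apply]
    rw [if_pos h]
  · rw [if_neg h]
    unfold adjP at h
    simp only [thrAdjLoop, Matrix.of_apply]
    rw [if_neg h]

def tinv (m j : ℕ) : ℕ × Bool :=
  if j % 2 = 0 then (m - j / 2, true) else (m - (j + 1) / 2, false)

lemma adjP_tinv_iff {m p q : ℕ} (hm : 2 ≤ m) (hp : p < 2 * m - 2) (hq : q < 2 * m - 2) :
    adjP (tinv m p) (tinv m q) ↔ ((q % 2 = 0 ∧ q ≤ p) ∨ (p % 2 = 0 ∧ p ≤ q)) := by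
  rcases Nat.mod_two_eq_zero_or_one p with hp2 | hp2 <;>
    rcases Nat.mod_two_eq_zero_or_one q with hq2 | hq2 <;>
      simp only [adjP, tinv, hp2, hq2, if_pos, if_neg, reduceIte] <;> simp <;> omega

-- existence and uniqueness of the index
lemma tinv_exists_unique {m : ℕ} (hm : 2 ≤ m) (p : ℕ × Bool) (h1 : 1 ≤ p.1) (h2 : p.1 ≤ m)
    (hne : p ≠ (1, true)) (hlt : p.2 = false → p.1 < m) :
    ∃ j : Fin (2 * m - 2), p = tinv m (j : ℕ) ∧
      ∀ j' : Fin (2 * m - 2), p = tinv m (j' : ℕ) → j' = j := by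
  obtain ⟨i, e⟩ := p
  have hi1 : 1 ≤ i := h1
  have him : i ≤ m := h2
  cases e with
  | true =>
    have hi2 : 2 ≤ i := by
      have : i ≠ 1 := fun h => hne (by rw [h])
      omega
    refine ⟨⟨2 * (m - i), by omega⟩, ?_, ?_⟩
    · simp only [tinv]
      rw [if_pos (by omega), Prod.mk.injEq]
      exact ⟨by omega, rfl⟩
    · intro j' hj'
      have hj'J : (j' : ℕ) < 2 * m - 2 := j'.isLt
      apply Fin.ext
      simp only [tinv] at hj'
      rcases Nat.mod_two_eq_zero_or_one (j' : ℕ) with h' | h'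
      · rw [if_pos h', Prod.mk.injEq] at hj'
        have := hj'.1
        simp only [Fin.val_mk]
        omega
      · rw [if_neg (by omega), Prod.mk.injEq] at hj'
        exact absurd hj'.2 (by simp)
  | false =>
    have hltm : i < m := hlt rfl
    refine ⟨⟨2 * (m - i) - 1, by omega⟩, ?_, ?_⟩
    · simp only [tinv]
      rw [if_neg (by omega), Prod.mk.injEq]
      exact ⟨by omega, rfl⟩
    · intro j' hj'
      have hj'J : (j' : ℕ) < 2 * m - 2 := j'.isLt
      apply Fin.ext
      simp only [tinv] at hj'
      rcases Nat.mod_two_eq_zero_or_one (j' : ℕ) with h' | h'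
      · rw [if_pos h', Prod.mk.injEq] at hj'
        exact absurd hj'.2 (by simp)
      · rw [if_neg (by omega), Prod.mk.injEq] at hj'
        have := hj'.1
        simp only [Fin.val_mk]
        omega


/-- for a threshold graph with self-loops with `m ≥ 2` and `k_1 = 0`, the characteristic
polynomial of the adjacency matrix factors as `x^{n-J} det(x I - B̃)` where `B̃` is the
loop-reduced matrix of size `J = 2m-2` built from `(k_m, l_{m-1}, …, k_2, l_1)`; moreover
`0` is not an eigenvalue of `B̃`, so the algebraic multiplicity of the eigenvalue `0` of
`Ã_G` is exactly `n - (2m-2)`. -/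
theorem thresholdGraphLoops_charpoly_factorization_k1_zero
    (m n : ℕ) (k l : ℕ → ℕ) (hm : 1 ≤ m)
    (hk : ∀ i, 2 ≤ i → i ≤ m → 1 ≤ k i)
    (hl : ∀ i, 1 ≤ i → i + 1 ≤ m → 1 ≤ l i)
    (hm2 : 2 ≤ m) (hk1 : k 1 = 0)
    (hn : n = ∑ i ∈ Finset.Icc 1 m, (k i + l i))
    (b : Fin n → ℕ × Bool)
    (hb : ∀ v, (b v).1 ∈ Finset.Icc 1 m)
    (hcard1 : ∀ i ∈ Finset.Icc 1 m,
      (Finset.univ.filter fun v => b v = (i, true)).card = k i)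
    (hcard0 : ∀ i ∈ Finset.Icc 1 m,
      (Finset.univ.filter fun v => b v = (i, false)).card = l i) :
    (thrAdjLoop b).charpoly =
        X ^ (n - (2 * m - 2)) *
        (loopReducedMatrix (aseq m k l (2 * m - 2))).charpoly ∧
    ¬ (loopReducedMatrix (aseq m k l (2 * m - 2))).charpoly.IsRoot 0 ∧
    ((thrAdjLoop b).charpoly.rootMultiplicity 0 = n - (2 * m - 2)) := by
  have hno1 : ∀ v : Fin n, b v ≠ (1, true) := by
    intro v hv
    have h := hcard1 1 (Finset.mem_Icc.2 ⟨le_refl 1, hm⟩)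
    rw [hk1, Finset.card_eq_zero] at h
    have hmem : v ∈ Finset.univ.filter fun w => b w = (1, true) := by
      simp [hv]
    rw [h] at hmem
    exact absurd hmem (Finset.notMem_empty v)
  set MA : Matrix (Fin n) (Fin (2 * m - 2)) ℝ :=
    Matrix.of (fun v j => if b v = tinv m (j : ℕ) then (1 : ℝ) else 0) with hMA
  set MB : Matrix (Fin (2 * m - 2)) (Fin n) ℝ :=
    Matrix.of (fun j v => if adjP (tinv m (j : ℕ)) (b v) then (1 : ℝ) else 0) with hMB
  have hAB : MA * MB = thrAdjLoop b := by
    ext u v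
    rw [Matrix.mul_apply, thrAdjLoop_apply]
    by_cases hadj : adjP (b u) (b v)
    · rw [if_pos hadj]
      have hbu := Finset.mem_Icc.1 (hb u)
      have hlt : (b u).2 = false → (b u).1 < m := by
        intro hf
        rcases hadj with ⟨h, _⟩ | ⟨_, h⟩
        · rw [hf] at h; simp at h
        · rcases h with h | ⟨_, h⟩
          · rw [hf] at h; simp at h
          · have hbv := Finset.mem_Icc.1 (hb v); omega
      obtain ⟨j₀, hj₀, huniq⟩ := tinv_exists_unique hm2 (b u) hbu.1 hbu.2 (hno1 u) hlt
      rw [Finset.sum_eq_single j₀]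
      · simp only [hMA, hMB, Matrix.of_apply]
        rw [if_pos hj₀, ← hj₀, if_pos hadj, one_mul]
      · intro q _ hq
        simp only [hMA, Matrix.of_apply]
        rw [if_neg fun h => hq (huniq q h), zero_mul]
      · intro h; exact absurd (Finset.mem_univ _) h
    · rw [if_neg hadj]
      apply Finset.sum_eq_zero
      intro q _
      simp only [hMA, hMB, Matrix.of_apply]
      by_cases hq : b u = tinv m (q : ℕ)
      · rw [if_pos hq, ← hq, if_neg hadj, mul_zero]
      · rw [if_neg hq, zero_mul]
  have hcardq : ∀ q : Fin (2 * m - 2),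
      ((Finset.univ.filter fun v => b v = tinv m (q : ℕ)).card : ℝ) =
        aseq m k l (2 * m - 2) q := by
    intro q
    have hqJ : (q : ℕ) < 2 * m - 2 := q.isLt
    simp only [aseq]
    rcases Nat.mod_two_eq_zero_or_one (q : ℕ) with h2 | h2
    · have ht : tinv m (q : ℕ) = (m - (q : ℕ) / 2, true) := by simp [tinv, h2]
      rw [ht, if_pos h2, hcard1 (m - (q : ℕ) / 2) (Finset.mem_Icc.2 ⟨by omega, by omega⟩)]
    · have ht : tinv m (q : ℕ) = (m - ((q : ℕ) + 1) / 2, false) := by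
        simp only [tinv]
        rw [if_neg (by omega)]
      rw [ht, if_neg (by omega),
        hcard0 (m - ((q : ℕ) + 1) / 2) (Finset.mem_Icc.2 ⟨by omega, by omega⟩)]
  have hBA : MB * MA = loopReducedMatrix (aseq m k l (2 * m - 2)) := by
    ext p q
    rw [Matrix.mul_apply]
    have step : ∀ v : Fin n, MB p v * MA v q =
        if b v = tinv m (q : ℕ) then
          (if adjP (tinv m (p : ℕ)) (tinv m (q : ℕ)) then (1 : ℝ) else 0) else 0 := by
      intro v
      simp only [hMA, hMB, Matrix.of_apply]
      by_cases hv : b v = tinv m (q : ℕ)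
      · rw [hv]
        simp
      · rw [if_neg hv, if_neg hv, mul_zero]
    rw [Finset.sum_congr rfl (fun v _ => step v), ← Finset.sum_filter, Finset.sum_const,
      nsmul_eq_mul, hcardq q]
    simp only [loopReducedMatrix, Matrix.of_apply]
    by_cases hpat : ((q : ℕ) % 2 = 0 ∧ (q : ℕ) ≤ (p : ℕ)) ∨
        ((p : ℕ) % 2 = 0 ∧ (p : ℕ) ≤ (q : ℕ))
    · rw [if_pos ((adjP_tinv_iff hm2 p.isLt q.isLt).2 hpat), if_pos hpat, mul_one]
    · rw [if_neg (fun h => hpat ((adjP_tinv_iff hm2 p.isLt q.isLt).1 h)), if_neg hpat, mul_zero]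
  have hapos : ∀ j : Fin (2 * m - 2), 0 < aseq m k l (2 * m - 2) j := by
    intro j
    have hjJ : (j : ℕ) < 2 * m - 2 := j.isLt
    simp only [aseq]
    rcases Nat.mod_two_eq_zero_or_one (j : ℕ) with h2 | h2
    · rw [if_pos h2]
      exact_mod_cast Nat.lt_of_lt_of_le Nat.zero_lt_one (hk _ (by omega) (by omega))
    · rw [if_neg (by omega)]
      exact_mod_cast Nat.lt_of_lt_of_le Nat.zero_lt_one (hl _ (by omega) (by omega))
  have hJn : 2 * m - 2 ≤ n := by
    have h1 : ∑ i ∈ Finset.Icc 2 m, 1 ≤ ∑ i ∈ Finset.Icc 2 m, k i :=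
      Finset.sum_le_sum fun i hi => hk i (Finset.mem_Icc.1 hi).1 (Finset.mem_Icc.1 hi).2
    have h2 : ∑ i ∈ Finset.Icc 2 m, k i ≤ ∑ i ∈ Finset.Icc 1 m, k i :=
      Finset.sum_le_sum_of_subset (Finset.Icc_subset_Icc_left (by omega))
    have h3 : ∑ i ∈ Finset.Icc 1 (m - 1), 1 ≤ ∑ i ∈ Finset.Icc 1 (m - 1), l i :=
      Finset.sum_le_sum fun i hi => hl i (Finset.mem_Icc.1 hi).1
        (by have := (Finset.mem_Icc.1 hi).2; omega)
    have h4 : ∑ i ∈ Finset.Icc 1 (m - 1), l i ≤ ∑ i ∈ Finset.Icc 1 m, l i :=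
      Finset.sum_le_sum_of_subset (Finset.Icc_subset_Icc_right (by omega))
    have h5 : n = ∑ i ∈ Finset.Icc 1 m, k i + ∑ i ∈ Finset.Icc 1 m, l i := by
      rw [hn, Finset.sum_add_distrib]
    simp only [Finset.sum_const, smul_eq_mul, mul_one, Nat.card_Icc] at h1 h3
    omega
  have hfact : (thrAdjLoop b).charpoly =
      X ^ (n - (2 * m - 2)) * (loopReducedMatrix (aseq m k l (2 * m - 2))).charpoly := by
    rw [← hAB, ← hBA]
    exact charpoly_factor hJn MA MB
  have hdet := loopReduced_det_ne_zero (by omega) _ hapos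
  have hroot : ¬ (loopReducedMatrix (aseq m k l (2 * m - 2))).charpoly.IsRoot 0 := by
    intro h
    apply hdet
    rw [Matrix.det_eq_sign_charpoly_coeff, Polynomial.coeff_zero_eq_eval_zero,
      show ((loopReducedMatrix (aseq m k l (2 * m - 2))).charpoly.eval 0) = 0 from h, mul_zero]
  refine ⟨hfact, hroot, ?_⟩
  have hne : (thrAdjLoop b).charpoly ≠ 0 := (Matrix.charpoly_monic _).ne_zero
  rw [hfact] at hne ⊢
  rw [Polynomial.rootMultiplicity_mul hne, Polynomial.rootMultiplicity_eq_zero hroot, add_zero]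
  have hX : (X : ℝ[X]) ^ (n - (2 * m - 2)) = (X - C 0) ^ (n - (2 * m - 2)) := by
    rw [map_zero, sub_zero]
  rw [hX, Polynomial.rootMultiplicity_X_sub_C_pow]
end

section
/- Fix an integer m ≥ 1. Let X, X_1, X_2, … be i.i.d. random variables taking values in the nonnegative integers, with P(X = i) > 0 for every 0 ≤ i ≤ 2m−1. For each n ≥ 2 let A^{(n)} be the random n×n symmetric 0/1 matrix with A^{(n)}[i,j] = 1 if and only if i ≠ j and X_i + X_j > 2m−1. Then, almost surely, the empirical spectral distribution of A^{(n)} converges weakly, as n → ∞, to (1 − F(m−1))·δ_{−1} + F(m−1)·δ_0, where F(m−1) = P(X ≤ m−1). -/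
open MeasureTheory ProbabilityTheory Filter

/-- The empirical spectral distribution of an `n × n` real matrix: the uniform probability
measure on the roots of its characteristic polynomial, counted with multiplicity.  (For a
real symmetric matrix the characteristic polynomial splits over `ℝ`, so these roots are
exactly the eigenvalues with algebraic multiplicity.) -/
noncomputable def esd {n : ℕ} (A : Matrix (Fin n) (Fin n) ℝ) : Measure ℝ :=
  (n : ENNReal)⁻¹ • (A.charpoly.roots.map (fun lam => Measure.dirac lam)).sum

section Aux
open Polynomial Matrix

-- Lemma A: finite measure instance + integral over multiset dirac sum
lemma isFiniteMeasure_diracSum (s : Multiset ℝ) :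
    IsFiniteMeasure ((s.map (fun lam => Measure.dirac lam)).sum) := by
  induction s using Multiset.induction with
  | empty => simpa using inferInstanceAs (IsFiniteMeasure (0 : Measure ℝ))
  | cons a t ih =>
    rw [Multiset.map_cons, Multiset.sum_cons]
    have := ih; infer_instance

lemma integral_diracSum (s : Multiset ℝ) (f : BoundedContinuousFunction ℝ ℝ) :
    ∫ x, f x ∂ ((s.map (fun lam => Measure.dirac lam)).sum) = (s.map f).sum := by
  induction s using Multiset.induction with
  | empty => simp
  | cons a t ih =>
    rw [Multiset.map_cons, Multiset.sum_cons, Multiset.map_cons, Multiset.sum_cons]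
    have : IsFiniteMeasure ((t.map (fun lam => Measure.dirac lam)).sum) :=
      isFiniteMeasure_diracSum t
    rw [integral_add_measure (f.integrable _) (f.integrable _), ih,
      integral_dirac]

variable {n : Type*} [Fintype n] [DecidableEq n] {R : Type*} [CommRing R]

lemma charpoly_conj_eq (P A Q : Matrix n n R) (hPQ : P * Q = 1) :
    (P * A * Q).charpoly = A.charpoly := by
  have hPQ' : (P.map C) * (Q.map C) = 1 := by
    rw [← Matrix.map_mul, hPQ]; simp
  have hcm : charmatrix (P * A * Q) = (P.map C) * charmatrix A * (Q.map C) := by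
    rw [charmatrix, charmatrix, Matrix.mul_sub, Matrix.sub_mul]
    congr 1
    · rw [scalar_apply,
        show (P.map C) * (diagonal fun _ : n => (X : R[X]))
          = (diagonal fun _ : n => (X : R[X])) * (P.map C) from
          (Matrix.scalar_commute (X : R[X]) (fun r => Commute.all _ _) (P.map C)).symm,
        mul_assoc, hPQ', mul_one]
    · simp only [RingHom.mapMatrix_apply, Matrix.map_mul]
  rw [Matrix.charpoly, Matrix.charpoly, hcm, det_mul, det_mul, mul_comm, ← mul_assoc,
    mul_comm (Q.map C).det, ← det_mul, hPQ', det_one, one_mul]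

lemma charpoly_diagonal (d : n → R) :
    (diagonal d).charpoly = ∏ i, (X - C (d i)) := by
  rw [Matrix.charpoly]
  have : charmatrix (diagonal d) = diagonal (fun i => X - C (d i)) := by
    ext i j
    by_cases h : i = j
    · subst h; simp [charmatrix_apply_eq]
    · simp [charmatrix_apply_ne _ _ _ h, diagonal_apply_ne _ h]
  rw [this, det_diagonal]

lemma charpoly_isHermitian_real {k : ℕ} {A : Matrix (Fin k) (Fin k) ℝ} (hA : A.IsHermitian) :
    A.charpoly = ∏ i, (X - C (hA.eigenvalues i)) := by
  have hU : ((hA.eigenvectorUnitary : Matrix (Fin k) (Fin k) ℝ)) *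
      (star (hA.eigenvectorUnitary : Matrix (Fin k) (Fin k) ℝ)) = 1 :=
    (Matrix.mem_unitaryGroup_iff).mp hA.eigenvectorUnitary.2
  calc A.charpoly
      = ((hA.eigenvectorUnitary : Matrix (Fin k) (Fin k) ℝ) *
          diagonal (RCLike.ofReal ∘ hA.eigenvalues) *
          (star (hA.eigenvectorUnitary : Matrix (Fin k) (Fin k) ℝ))).charpoly := by
        exact congrArg Matrix.charpoly hA.spectral_theorem
    _ = (diagonal (RCLike.ofReal ∘ hA.eigenvalues)).charpoly := by
        exact charpoly_conj_eq _ _ _ hU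
    _ = ∏ i, (X - C (hA.eigenvalues i)) := by
        rw [_root_.charpoly_diagonal]; rfl

lemma roots_charpoly_isHermitian_real {k : ℕ} {A : Matrix (Fin k) (Fin k) ℝ}
    (hA : A.IsHermitian) :
    A.charpoly.roots = Finset.univ.val.map hA.eigenvalues := by
  rw [charpoly_isHermitian_real hA]
  have : ∏ i, (X - C (hA.eigenvalues i))
      = ((Finset.univ.val.map hA.eigenvalues).map fun a => X - C a).prod := by
    rw [Multiset.map_map]; rfl
  rw [this, roots_multiset_prod_X_sub_C]

lemma rank_sub_smul_one {k : ℕ} {A : Matrix (Fin k) (Fin k) ℝ} (hA : A.IsHermitian) (μ : ℝ) :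
    (A - μ • 1).rank = (Finset.univ.filter (fun i => hA.eigenvalues i ≠ μ)).card := by
  set U : Matrix (Fin k) (Fin k) ℝ := (hA.eigenvectorUnitary : Matrix (Fin k) (Fin k) ℝ) with hUdef
  have hU : U * star U = 1 := (Matrix.mem_unitaryGroup_iff).mp hA.eigenvectorUnitary.2
  have hdet : IsUnit U.det :=
    IsUnit.of_mul_eq_one (star U).det (by rw [← det_mul, hU, det_one])
  have hU' : star U * U = 1 := (Matrix.mem_unitaryGroup_iff').mp hA.eigenvectorUnitary.2
  have hdet' : IsUnit (star U).det :=
    IsUnit.of_mul_eq_one U.det (by rw [← det_mul, hU', det_one])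
  have key : A - μ • 1 = U * (diagonal (fun i => hA.eigenvalues i - μ)) * star U := by
    have h1 : (μ • 1 : Matrix (Fin k) (Fin k) ℝ) = U * (μ • 1) * star U := by
      rw [Matrix.mul_smul, Matrix.smul_mul, mul_one, hU]
    calc A - μ • 1
        = U * diagonal (RCLike.ofReal ∘ hA.eigenvalues) * star U - U * (μ • 1) * star U := by
          rw [← h1]; exact congrArg (· - μ • 1) hA.spectral_theorem
      _ = U * (diagonal (RCLike.ofReal ∘ hA.eigenvalues) - μ • 1) * star U := by
          rw [Matrix.mul_sub, Matrix.sub_mul]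
      _ = U * (diagonal (fun i => hA.eigenvalues i - μ)) * star U := by
          rw [smul_one_eq_diagonal, ← diagonal_sub]
          rfl
  rw [key, rank_mul_eq_left_of_isUnit_det _ _ hdet', rank_mul_eq_right_of_isUnit_det _ _ hdet,
    rank_diagonal]
  rw [Fintype.card_subtype]
  congr 1
  ext i
  simp [sub_eq_zero]

lemma rank_le_card_of_span {k : ℕ} (A : Matrix (Fin k) (Fin k) ℝ) {ι : Type*} [Fintype ι]
    (v : ι → (Fin k → ℝ))
    (h : ∀ j, (fun i => A i j) ∈ Submodule.span ℝ (Set.range v)) :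
    A.rank ≤ Fintype.card ι := by
  classical
  have h1 : LinearMap.range A.mulVecLin ≤ Submodule.span ℝ (Set.range v) := by
    rw [Matrix.range_mulVecLin]
    rw [Submodule.span_le]
    rintro x ⟨j, rfl⟩
    exact h j
  calc A.rank = Module.finrank ℝ (LinearMap.range A.mulVecLin) := rfl
    _ ≤ Module.finrank ℝ (Submodule.span ℝ (Set.range v)) := Submodule.finrank_mono h1
    _ ≤ (Set.range v).toFinset.card := finrank_span_le_card _
    _ ≤ Fintype.card ι := by
        rw [Set.toFinset_range]
        exact (Finset.card_image_le).trans (le_of_eq (Finset.card_univ))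

section Counts
open Finset

variable {m k : ℕ} (x : Fin k → ℕ)

/-- the adjacency matrix built from hidden values `x`. -/
noncomputable def adjM (m : ℕ) (x : Fin k → ℕ) : Matrix (Fin k) (Fin k) ℝ :=
  Matrix.of fun i j : Fin k => if i ≠ j ∧ 2 * m - 1 < x i + x j then (1 : ℝ) else 0

lemma adjM_isHermitian : (adjM m x).IsHermitian := by
  ext i j
  simp only [adjM, conjTranspose_apply, Matrix.of_apply, star_trivial]
  by_cases h : i = j
  · subst h; rfl
  · have h' : j ≠ i := fun hh => h hh.symm
    rw [add_comm (x j) (x i)]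
    simp [h, h']

lemma adjM_rank_le :
    (adjM m x).rank ≤ m + (univ.filter (fun j => m ≤ x j)).card := by
  classical
  set g : ℕ → (Fin k → ℝ) := fun v i => if 2 * m - 1 < x i + v then 1 else 0 with hg
  set v : (Fin m ⊕ {j : Fin k // m ≤ x j}) → (Fin k → ℝ) :=
    Sum.elim (fun t => g t) (fun j => fun i => adjM m x i j.1) with hv
  have h := rank_le_card_of_span (adjM m x) v ?_
  · calc (adjM m x).rank ≤ Fintype.card (Fin m ⊕ {j : Fin k // m ≤ x j}) := h
      _ = m + (univ.filter (fun j => m ≤ x j)).card := by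
          rw [Fintype.card_sum, Fintype.card_fin, Fintype.card_subtype]
  · intro j
    by_cases hj : m ≤ x j
    · exact Submodule.subset_span ⟨Sum.inr ⟨j, hj⟩, rfl⟩
    · push_neg at hj
      have : (fun i => adjM m x i j) = v (Sum.inl ⟨x j, hj⟩) := by
        funext i
        simp only [hv, Sum.elim_inl, hg, adjM, Matrix.of_apply]
        by_cases h : i = j
        · subst h
          have : ¬ (2 * m - 1 < x i + x i) := by omega
          simp [this]
        · simp [h]
      rw [this]
      exact Submodule.subset_span ⟨Sum.inl ⟨x j, hj⟩, rfl⟩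

lemma adjM_add_one_rank_le (hm : 1 ≤ m) :
    (adjM m x - (-1 : ℝ) • 1).rank ≤ (m + 1) + (univ.filter (fun j => x j < m)).card := by
  classical
  set B := adjM m x - (-1 : ℝ) • 1 with hB
  have hBapp : ∀ i j, B i j =
      (if i ≠ j ∧ 2 * m - 1 < x i + x j then (1:ℝ) else 0) + (if i = j then 1 else 0) := by
    intro i j
    simp only [hB, adjM, Matrix.sub_apply, Matrix.smul_apply, Matrix.one_apply, Matrix.of_apply]
    by_cases h : i = j <;> simp [h]
  set g : ℕ → (Fin k → ℝ) := fun v i => if 2 * m - 1 < x i + v then 1 else 0 with hg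
  set v : (Fin (m + 1) ⊕ {j : Fin k // x j < m}) → (Fin k → ℝ) :=
    Sum.elim (fun t => g (m + t)) (fun j => fun i => B i j.1) with hv
  have h := rank_le_card_of_span B v ?_
  · calc B.rank ≤ Fintype.card (Fin (m+1) ⊕ {j : Fin k // x j < m}) := h
      _ = (m + 1) + (univ.filter (fun j => x j < m)).card := by
          rw [Fintype.card_sum, Fintype.card_fin, Fintype.card_subtype]
  · intro j
    by_cases hj : x j < m
    · exact Submodule.subset_span ⟨Sum.inr ⟨j, hj⟩, rfl⟩
    · push_neg at hj
      have hle : min (x j) (2 * m) - m < m + 1 := by omega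
      have : (fun i => B i j) = v (Sum.inl ⟨min (x j) (2 * m) - m, hle⟩) := by
        funext i
        simp only [hv, Sum.elim_inl, hg]
        rw [hBapp]
        have harg : m + (min (x j) (2 * m) - m) = min (x j) (2 * m) := by omega
        rw [harg]
        by_cases h : i = j
        · subst h
          have h1 : 2 * m - 1 < x i + min (x i) (2 * m) := by omega
          simp [h1]
        · have h2 : (2 * m - 1 < x i + x j) ↔ (2 * m - 1 < x i + min (x j) (2 * m)) := by omega
          simp only [ne_eq, h, not_false_eq_true, true_and, h2, if_false, add_zero]

      rw [this]
      exact Submodule.subset_span ⟨Sum.inl _, rfl⟩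

end Counts

open Finset in
lemma adjM_key {m k : ℕ} (hm : 1 ≤ m) (x : Fin k → ℕ) :
    ∃ lam : Fin k → ℝ,
      (adjM m x).charpoly.roots = Finset.univ.val.map lam ∧
      (univ.filter (fun j => x j < m)).card
        ≤ (univ.filter (fun i => lam i = 0)).card + m ∧
      (univ.filter (fun j => m ≤ x j)).card
        ≤ (univ.filter (fun i => lam i = -1)).card + (m + 1) := by
  classical
  have hA := adjM_isHermitian (m := m) x
  refine ⟨hA.eigenvalues, roots_charpoly_isHermitian_real hA, ?_, ?_⟩
  · have h1 : (adjM m x).rank = (univ.filter (fun i => hA.eigenvalues i ≠ 0)).card := by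
      have := rank_sub_smul_one hA 0
      rwa [zero_smul, sub_zero] at this
    have h2 := adjM_rank_le (m := m) x
    have h3 : (univ.filter (fun i => hA.eigenvalues i = 0)).card
        + (univ.filter (fun i => hA.eigenvalues i ≠ 0)).card = k := by
      rw [Finset.card_filter_add_card_filter_not]; exact Finset.card_univ.trans (Fintype.card_fin k)
    have h4 : (univ.filter (fun j => x j < m)).card
        + (univ.filter (fun j => m ≤ x j)).card = k := by
      have := Finset.card_filter_add_card_filter_not
        (s := (univ : Finset (Fin k))) (p := fun j => x j < m)
      simp only [not_lt] at this
      rw [this]; exact Finset.card_univ.trans (Fintype.card_fin k)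
    omega
  · have h1 : (adjM m x - (-1 : ℝ) • 1).rank
        = (univ.filter (fun i => hA.eigenvalues i ≠ -1)).card := rank_sub_smul_one hA (-1)
    have h2 := adjM_add_one_rank_le (m := m) x hm
    have h3 : (univ.filter (fun i => hA.eigenvalues i = -1)).card
        + (univ.filter (fun i => hA.eigenvalues i ≠ -1)).card = k := by
      rw [Finset.card_filter_add_card_filter_not]; exact Finset.card_univ.trans (Fintype.card_fin k)
    have h4 : (univ.filter (fun j => x j < m)).card
        + (univ.filter (fun j => m ≤ x j)).card = k := by
      have := Finset.card_filter_add_card_filter_not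
        (s := (univ : Finset (Fin k))) (p := fun j => x j < m)
      simp only [not_lt] at this
      rw [this]; exact Finset.card_univ.trans (Fintype.card_fin k)
    omega

open Finset BoundedContinuousFunction in
lemma sum_estimate {k m : ℕ} (lam : Fin k → ℝ) (f : BoundedContinuousFunction ℝ ℝ)
    (L H : ℕ) (hLH : L + H = k)
    (h0 : L ≤ (univ.filter (fun i => lam i = 0)).card + m)
    (h1 : H ≤ (univ.filter (fun i => lam i = -1)).card + (m + 1)) :
    |(∑ i, f (lam i)) - ((H : ℝ) * f (-1) + (L : ℝ) * f 0)| ≤ (4 * m + 3 : ℝ) * ‖f‖ := by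
  classical
  set s1 := univ.filter (fun i : Fin k => lam i = -1) with hs1
  set s0 := univ.filter (fun i : Fin k => lam i = 0) with hs0
  set c1 := s1.card with hc1
  set c0 := s0.card with hc0
  have hdisj : Disjoint s1 s0 := by
    rw [Finset.disjoint_left]
    intro a ha1 ha0
    rw [hs1, Finset.mem_filter] at ha1
    rw [hs0, Finset.mem_filter] at ha0
    rw [ha1.2] at ha0
    norm_num at ha0
  have hsub : s1 ∪ s0 ⊆ univ := subset_univ _
  have hsplit : (∑ i, f (lam i))
      = (∑ i ∈ univ \ (s1 ∪ s0), f (lam i)) + (∑ i ∈ s1 ∪ s0, f (lam i)) :=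
    (Finset.sum_sdiff hsub).symm
  have hs1sum : ∑ i ∈ s1, f (lam i) = (c1 : ℝ) * f (-1) := by
    rw [Finset.sum_congr rfl (fun i hi => by rw [(Finset.mem_filter.mp hi).2]),
      Finset.sum_const, nsmul_eq_mul]
  have hs0sum : ∑ i ∈ s0, f (lam i) = (c0 : ℝ) * f 0 := by
    rw [Finset.sum_congr rfl (fun i hi => by rw [(Finset.mem_filter.mp hi).2]),
      Finset.sum_const, nsmul_eq_mul]
  have hc1c0 : c1 + c0 ≤ k := by
    rw [hc1, hc0, ← Finset.card_union_of_disjoint hdisj]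
    calc (s1 ∪ s0).card ≤ (univ : Finset (Fin k)).card := Finset.card_le_card hsub
      _ = k := by rw [card_univ, Fintype.card_fin]
  have hcard_rest : (univ \ (s1 ∪ s0)).card = k - (c1 + c0) := by
    rw [Finset.card_sdiff_of_subset hsub, Finset.card_union_of_disjoint hdisj, card_univ, Fintype.card_fin]
  have hRbound : |∑ i ∈ univ \ (s1 ∪ s0), f (lam i)| ≤ ((k - (c1 + c0) : ℕ) : ℝ) * ‖f‖ := by
    calc |∑ i ∈ univ \ (s1 ∪ s0), f (lam i)| ≤ ∑ i ∈ univ \ (s1 ∪ s0), |f (lam i)| :=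
        Finset.abs_sum_le_sum_abs _ _
      _ ≤ ∑ i ∈ univ \ (s1 ∪ s0), ‖f‖ := Finset.sum_le_sum (fun i _ => by
          simpa using f.norm_coe_le_norm (lam i))
      _ = ((k - (c1 + c0) : ℕ) : ℝ) * ‖f‖ := by rw [Finset.sum_const, nsmul_eq_mul, hcard_rest]
  have hf1 : |f (-1)| ≤ ‖f‖ := by simpa using f.norm_coe_le_norm (-1)
  have hf0 : |f 0| ≤ ‖f‖ := by simpa using f.norm_coe_le_norm 0
  have hfpos : (0 : ℝ) ≤ ‖f‖ := norm_nonneg f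
  -- natural number inequalities
  have hn1 : c1 ≤ H + m := by omega
  have hn2 : c0 ≤ L + (m + 1) := by omega
  have hrest : k - (c1 + c0) ≤ 2 * m + 1 := by omega
  have habs1 : |(c1 : ℝ) - (H : ℝ)| ≤ (m + 1 : ℝ) := by
    have a1 : (H : ℝ) ≤ (c1 : ℝ) + (m + 1) := by exact_mod_cast h1
    have a2 : (c1 : ℝ) ≤ (H : ℝ) + m := by exact_mod_cast hn1
    rw [abs_le]
    constructor <;> linarith
  have habs0 : |(c0 : ℝ) - (L : ℝ)| ≤ (m + 1 : ℝ) := by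
    have a1 : (L : ℝ) ≤ (c0 : ℝ) + m := by exact_mod_cast h0
    have a2 : (c0 : ℝ) ≤ (L : ℝ) + (m + 1) := by exact_mod_cast hn2
    rw [abs_le]
    constructor <;> linarith
  have hrestR : ((k - (c1 + c0) : ℕ) : ℝ) ≤ (2 * m + 1 : ℝ) := by
    have := Nat.cast_le (α := ℝ) |>.mpr hrest
    push_cast at this
    linarith
  rw [hsplit, Finset.sum_union hdisj, hs1sum, hs0sum]
  set R := ∑ i ∈ univ \ (s1 ∪ s0), f (lam i) with hR
  have key : R + ((c1 : ℝ) * f (-1) + (c0 : ℝ) * f 0) - ((H : ℝ) * f (-1) + (L : ℝ) * f 0)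
      = R + ((c1 : ℝ) - H) * f (-1) + ((c0 : ℝ) - L) * f 0 := by ring
  rw [key]
  calc |R + ((c1 : ℝ) - H) * f (-1) + ((c0 : ℝ) - L) * f 0|
      ≤ |R + ((c1 : ℝ) - H) * f (-1)| + |((c0 : ℝ) - L) * f 0| := abs_add_le _ _
    _ ≤ |R| + |((c1 : ℝ) - H) * f (-1)| + |((c0 : ℝ) - L) * f 0| := by
        have := abs_add_le R (((c1 : ℝ) - H) * f (-1))
        linarith
    _ ≤ ((k - (c1 + c0) : ℕ) : ℝ) * ‖f‖ + (m + 1 : ℝ) * ‖f‖ + (m + 1 : ℝ) * ‖f‖ := by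
        rw [abs_mul, abs_mul]
        have t1 : |(c1 : ℝ) - H| * |f (-1)| ≤ (m + 1 : ℝ) * ‖f‖ :=
          mul_le_mul habs1 hf1 (abs_nonneg _) (by positivity)
        have t0 : |(c0 : ℝ) - L| * |f 0| ≤ (m + 1 : ℝ) * ‖f‖ :=
          mul_le_mul habs0 hf0 (abs_nonneg _) (by positivity)
        linarith
    _ ≤ (4 * m + 3 : ℝ) * ‖f‖ := by
        have t2 : ((k - (c1 + c0) : ℕ) : ℝ) * ‖f‖ ≤ (2 * m + 1 : ℝ) * ‖f‖ :=
          mul_le_mul_of_nonneg_right hrestR hfpos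
        nlinarith

open MeasureTheory in
lemma integral_esd {k : ℕ} (A : Matrix (Fin k) (Fin k) ℝ) (lam : Fin k → ℝ)
    (h : A.charpoly.roots = Finset.univ.val.map lam) (f : BoundedContinuousFunction ℝ ℝ) :
    ∫ x, f x ∂ (esd A) = (k : ℝ)⁻¹ * ∑ i, f (lam i) := by
  rw [esd, integral_smul_measure, integral_diracSum, h]
  congr 1
  · simp
  · rw [Multiset.map_map]
    rfl

open ProbabilityTheory Filter Topology in
lemma slln_indicator {Ω : Type*} [MeasureSpace Ω] [IsProbabilityMeasure (ℙ : Measure Ω)]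
    (m : ℕ) (X : ℕ → Ω → ℕ) (hmeas : ∀ i, Measurable (X i))
    (hindep : iIndepFun X ℙ)
    (hident : ∀ i, IdentDistrib (X i) (X 0) ℙ ℙ) :
    ∀ᵐ ω ∂(ℙ : Measure Ω), Tendsto
      (fun n : ℕ => ((Finset.univ.filter (fun j : Fin n => X j ω < m)).card : ℝ) / n)
      atTop (𝓝 ((ℙ {ω | X 0 ω < m}).toReal)) := by
  classical
  set g : ℕ → ℝ := fun t => if t < m then 1 else 0 with hg
  have hgmeas : Measurable g := measurable_from_top
  set Y : ℕ → Ω → ℝ := fun i ω => g (X i ω) with hY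
  have hint : Integrable (Y 0) ℙ := by
    have hs : MeasurableSet {ω | X 0 ω < m} := (hmeas 0) measurableSet_Iio
    have : Y 0 = Set.indicator {ω | X 0 ω < m} (fun _ => (1 : ℝ)) := by
      funext ω
      rw [Set.indicator_apply]
      by_cases h : X 0 ω < m <;> simp [hY, hg, h, Set.mem_setOf_eq]
    rw [this]
    exact (integrable_const (1 : ℝ)).indicator hs
  have hindep' : Pairwise (Function.onFun (IndepFun · · ℙ) Y) := by
    intro i j hij
    exact (hindep.indepFun hij).comp hgmeas hgmeas
  have hident' : ∀ i, IdentDistrib (Y i) (Y 0) ℙ ℙ := fun i => (hident i).comp hgmeas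
  have hE : (ℙ : Measure Ω)[Y 0] = (ℙ {ω | X 0 ω < m}).toReal := by
    have hs : MeasurableSet {ω | X 0 ω < m} := (hmeas 0) measurableSet_Iio
    have h1 : Y 0 = Set.indicator {ω | X 0 ω < m} (fun _ => (1 : ℝ)) := by
      funext ω
      rw [Set.indicator_apply]
      by_cases h : X 0 ω < m <;> simp [hY, hg, h, Set.mem_setOf_eq]
    rw [h1, integral_indicator_const (1 : ℝ) hs, smul_eq_mul, mul_one]; rfl
  have := strong_law_ae_real Y hint hindep' hident'
  rw [hE] at this
  filter_upwards [this] with ω hω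
  have heq : ∀ n : ℕ, (∑ i ∈ Finset.range n, Y i ω)
      = ((Finset.univ.filter (fun j : Fin n => X j ω < m)).card : ℝ) := by
    intro n
    rw [← Fin.sum_univ_eq_sum_range (fun i => Y i ω) n]
    rw [hY]
    simp only [hg]
    rw [Finset.sum_boole]
  convert hω using 2 with n
  rw [heq n]

end Aux

open Topology in
/-- for the threshold network model with i.i.d. nonnegative-integer-valued
hidden variables `X_i` satisfying `P(X = i) > 0` for `0 ≤ i ≤ 2m-1` and threshold
`θ = 2m-1`, the empirical spectral distribution of the adjacency matrix converges weakly,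
almost surely, to `(1 - F(m-1))·δ_{-1} + F(m-1)·δ_0` where `F(m-1) = P(X ≤ m-1)`. -/
theorem thresholdModel_esd_tendsto
    {Ω : Type*} [MeasureSpace Ω] [IsProbabilityMeasure (ℙ : Measure Ω)]
    (m : ℕ) (hm : 1 ≤ m) (X : ℕ → Ω → ℕ)
    (hmeas : ∀ i, Measurable (X i))
    (hindep : iIndepFun X ℙ)
    (hident : ∀ i, IdentDistrib (X i) (X 0) ℙ ℙ)
    (hpos : ∀ i ≤ 2 * m - 1, 0 < ℙ {ω | X 0 ω = i}) :
    ∀ᵐ ω ∂(ℙ : Measure Ω), ∀ f : BoundedContinuousFunction ℝ ℝ,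
      Tendsto
        (fun n : ℕ => ∫ x, f x ∂ esd (Matrix.of fun i j : Fin n =>
          if i ≠ j ∧ 2 * m - 1 < X i ω + X j ω then (1 : ℝ) else 0))
        atTop
        (nhds ((1 - (ℙ {ω | X 0 ω ≤ m - 1}).toReal) * f (-1)
              + (ℙ {ω | X 0 ω ≤ m - 1}).toReal * f 0)) := by
  classical
  have hset : {ω : Ω | X 0 ω ≤ m - 1} = {ω : Ω | X 0 ω < m} := by
    ext ω; simp only [Set.mem_setOf_eq]; omega
  rw [hset]
  filter_upwards [slln_indicator m X hmeas hindep hident] with ω hω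
  intro f
  set F := (ℙ {ω : Ω | X 0 ω < m}).toReal with hF
  set x : ∀ n : ℕ, Fin n → ℕ := fun n i => X i ω with hx
  choose lam hroots h0 h1 using fun n => adjM_key (m := m) (k := n) hm (x n)
  set L : ℕ → ℕ := fun n => (Finset.univ.filter (fun j : Fin n => x n j < m)).card with hL
  set H : ℕ → ℕ := fun n => (Finset.univ.filter (fun j : Fin n => m ≤ x n j)).card with hH
  have hLH : ∀ n, L n + H n = n := by
    intro n
    have := Finset.card_filter_add_card_filter_not
      (s := (Finset.univ : Finset (Fin n))) (p := fun j => x n j < m)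
    simp only [not_lt] at this
    rw [hL, hH]
    simp only []
    rw [this, Finset.card_univ, Fintype.card_fin]
  have hintg : ∀ n : ℕ, ∫ y, f y ∂ esd (adjM m (x n)) = (n : ℝ)⁻¹ * ∑ i, f (lam n i) :=
    fun n => integral_esd (adjM m (x n)) (lam n) (hroots n) f
  have hest : ∀ n : ℕ, |(∑ i, f (lam n i)) - ((H n : ℝ) * f (-1) + (L n : ℝ) * f 0)|
      ≤ (4 * m + 3 : ℝ) * ‖f‖ :=
    fun n => sum_estimate (lam n) f (L n) (H n) (hLH n) (h0 n) (h1 n)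
  set main : ℕ → ℝ := fun n => (H n : ℝ) / n * f (-1) + (L n : ℝ) / n * f 0 with hmain_def
  have herr : ∀ n : ℕ, 1 ≤ n →
      ‖(∫ y, f y ∂ esd (adjM m (x n))) - main n‖ ≤ ((4 * m + 3 : ℝ) * ‖f‖) / n := by
    intro n hn
    have hnpos : (0 : ℝ) < n := by exact_mod_cast hn
    rw [hintg n]
    have : (∫ y, f y ∂ esd (adjM m (x n))) = (n : ℝ)⁻¹ * ∑ i, f (lam n i) := hintg n
    have hmn : main n = (n : ℝ)⁻¹ * ((H n : ℝ) * f (-1) + (L n : ℝ) * f 0) := by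
      rw [hmain_def]
      field_simp
    rw [hmn, ← mul_sub, Real.norm_eq_abs, abs_mul, abs_of_pos (inv_pos.mpr hnpos)]
    rw [div_eq_inv_mul]
    exact mul_le_mul_of_nonneg_left (hest n) (le_of_lt (inv_pos.mpr hnpos))
  have hr : Tendsto (fun n : ℕ => (L n : ℝ) / n) atTop (𝓝 F) := hω
  have hmain : Tendsto main atTop (𝓝 ((1 - F) * f (-1) + F * f 0)) := by
    have h2 : Tendsto (fun n : ℕ => (1 - (L n : ℝ) / n) * f (-1) + ((L n : ℝ) / n) * f 0)
        atTop (𝓝 ((1 - F) * f (-1) + F * f 0)) :=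
      ((tendsto_const_nhds.sub hr).mul tendsto_const_nhds).add (hr.mul tendsto_const_nhds)
    refine h2.congr' ?_
    filter_upwards [eventually_ge_atTop 1] with n hn
    have hnpos : (0 : ℝ) < n := by exact_mod_cast hn
    have : (H n : ℝ) / n = 1 - (L n : ℝ) / n := by
      have hsum : (L n : ℝ) + (H n : ℝ) = (n : ℝ) := by exact_mod_cast hLH n
      field_simp
      linarith
    rw [hmain_def]
    simp only []
    rw [this]
  have hbound : Tendsto (fun n : ℕ => ((4 * m + 3 : ℝ) * ‖f‖) / n) atTop (𝓝 0) :=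
    tendsto_const_div_atTop_nhds_zero_nat _
  have hdiff : Tendsto (fun n : ℕ => (∫ y, f y ∂ esd (adjM m (x n))) - main n) atTop (𝓝 0) := by
    apply squeeze_zero_norm' _ hbound
    filter_upwards [eventually_ge_atTop 1] with n hn
    exact herr n hn
  have hfinal : Tendsto (fun n : ℕ => ∫ y, f y ∂ esd (adjM m (x n))) atTop
      (𝓝 ((1 - F) * f (-1) + F * f 0)) := by
    have := hdiff.add hmain
    simp only [sub_add_cancel, zero_add] at this
    exact this
  exact hfinal
end

section
/- Let (Ỹ_i)_{i≥1} be i.i.d. random variables with P(Ỹ_i = 1) = P(Ỹ_i = 0) = 1/2, and for n ≥ 2 set T_n = n − 2·Σ_{i=1}^{n−1} (1 − Ỹ_i)·Ỹ_{i+1} − Ỹ_1. Then T_n/n converges to 1/2 almost surely as n → ∞. -/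
open MeasureTheory ProbabilityTheory Filter Finset
open scoped ENNReal

section Aux

variable {Ω : Type*} [MeasureSpace Ω] [IsProbabilityMeasure (ℙ : Measure Ω)]

/-- distribution of a `{0,1}`-valued random variable -/
lemma aux_bern_map (f : Ω → ℝ) (hf : Measurable f) (p q : ℝ≥0∞)
    (h1 : ℙ {ω | f ω = 1} = p) (h0 : ℙ {ω | f ω = 0} = q) (hpq : q + p = 1) :
    Measure.map f ℙ = q • Measure.dirac (0:ℝ) + p • Measure.dirac 1 := by
  have hm1 : MeasurableSet {ω | f ω = 1} := hf (measurableSet_singleton 1)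
  have hm0 : MeasurableSet {ω | f ω = 0} := hf (measurableSet_singleton 0)
  have hdisj : Disjoint {ω | f ω = 0} {ω | f ω = 1} := by
    rw [Set.disjoint_left]
    rintro ω hω0 hω1
    exact zero_ne_one ((Set.mem_setOf_eq ▸ hω0).symm.trans (Set.mem_setOf_eq ▸ hω1))
  have hunion : ℙ ({ω | f ω = 0} ∪ {ω | f ω = 1}) = 1 := by
    rw [measure_union hdisj hm1, h0, h1, hpq]
  have hgood : ∀ᵐ ω ∂(ℙ : Measure Ω), f ω = 0 ∨ f ω = 1 := by
    have hset : {ω | ¬(f ω = 0 ∨ f ω = 1)} = ({ω | f ω = 0} ∪ {ω | f ω = 1})ᶜ := by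
      ext ω; simp [not_or]
    rw [ae_iff, hset]
    exact (prob_compl_eq_zero_iff (hm0.union hm1)).2 hunion
  ext s hs
  rw [Measure.map_apply hf hs]
  by_cases h0s : (0:ℝ) ∈ s <;> by_cases h1s : (1:ℝ) ∈ s
  · have he : f ⁻¹' s =ᵐ[ℙ] (({ω | f ω = 0} ∪ {ω | f ω = 1} : Set Ω)) := by
      rw [Filter.eventuallyEq_set]
      filter_upwards [hgood] with ω hω
      constructor
      · intro _; exact hω
      · rintro (h | h)
        · show f ω ∈ s; rw [show f ω = 0 from h]; exact h0s
        · show f ω ∈ s; rw [show f ω = 1 from h]; exact h1s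
    rw [measure_congr he, hunion]
    simp [Measure.dirac_apply' _ hs, Set.indicator_of_mem h0s, Set.indicator_of_mem h1s, hpq]
  · have he : f ⁻¹' s =ᵐ[ℙ] {ω | f ω = 0} := by
      rw [Filter.eventuallyEq_set]
      filter_upwards [hgood] with ω hω
      constructor
      · intro hmem
        rcases hω with h | h
        · exact h
        · exact absurd (h ▸ hmem) h1s
      · intro h; show f ω ∈ s; rw [show f ω = 0 from h]; exact h0s
    rw [measure_congr he, h0]
    simp [Measure.dirac_apply' _ hs, Set.indicator_of_mem h0s, Set.indicator_of_notMem h1s]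
  · have he : f ⁻¹' s =ᵐ[ℙ] {ω | f ω = 1} := by
      rw [Filter.eventuallyEq_set]
      filter_upwards [hgood] with ω hω
      constructor
      · intro hmem
        rcases hω with h | h
        · exact absurd (h ▸ hmem) h0s
        · exact h
      · intro h; show f ω ∈ s; rw [show f ω = 1 from h]; exact h1s
    rw [measure_congr he, h1]
    simp [Measure.dirac_apply' _ hs, Set.indicator_of_mem h1s, Set.indicator_of_notMem h0s]
  · have he : f ⁻¹' s =ᵐ[ℙ] (∅ : Set Ω) := by
      rw [Filter.eventuallyEq_set]
      filter_upwards [hgood] with ω hω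
      simp only [Set.mem_preimage, Set.mem_empty_iff_false, iff_false]
      intro hmem
      rcases hω with h | h
      · exact absurd (h ▸ hmem) h0s
      · exact absurd (h ▸ hmem) h1s
    rw [measure_congr he]
    simp [Measure.dirac_apply' _ hs, Set.indicator_of_notMem h0s, Set.indicator_of_notMem h1s]

end Aux

/-- `(c n)/n → 1/2` whenever `2 c n` is within `2` of `n`. -/
lemma aux_half_limit (c : ℕ → ℕ) (hc : ∀ n, 2 * c n ≤ n ∧ n ≤ 2 * c n + 2) :
    Tendsto (fun n : ℕ => (c n : ℝ) / n) atTop (nhds (1/2)) := by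
  rw [← tendsto_sub_nhds_zero_iff]
  refine squeeze_zero_norm' (a := fun n : ℕ => 1 / (n:ℝ)) ?_ tendsto_one_div_atTop_nhds_zero_nat
  filter_upwards [eventually_ge_atTop 1] with n hn
  have hn0 : (0:ℝ) < n := by exact_mod_cast Nat.lt_of_lt_of_le Nat.zero_lt_one hn
  have key : (c n : ℝ)/n - 1/2 = (2*(c n:ℝ) - n)/(2*n) := by
    field_simp
  rw [Real.norm_eq_abs, key, abs_div, abs_of_pos (mul_pos two_pos hn0)]
  have hnum : |2*(c n:ℝ) - n| ≤ 2 := by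
    have h1 := (hc n).1
    have h2 := (hc n).2
    rw [abs_le]
    constructor
    · have : (n:ℝ) ≤ 2*(c n) + 2 := by exact_mod_cast h2
      linarith
    · have : 2*((c n):ℝ) ≤ n := by exact_mod_cast h1
      linarith
  calc |2*(c n:ℝ) - n| / (2*n) ≤ 2 / (2*n) := by gcongr
      _ = 1 / n := by
        rw [div_eq_div_iff (ne_of_gt (mul_pos two_pos hn0)) (ne_of_gt hn0)]
        ring

/-- splitting of a sum over `Icc 1 m` into odd- and even-indexed parts -/
lemma aux_sum_split (g : ℕ → ℝ) (m : ℕ) :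
    ∑ i ∈ Finset.Icc 1 m, g i =
      (∑ k ∈ Finset.range ((m+1)/2), g (2*k+1)) + ∑ k ∈ Finset.range (m/2), g (2*k+2) := by
  induction m with
  | zero => simp
  | succ m ih =>
    have hins : Finset.Icc 1 (m+1) = insert (m+1) (Finset.Icc 1 m) :=
      (Finset.insert_Icc_right_eq_Icc_add_one (by omega)).symm
    rw [hins, Finset.sum_insert (by simp), ih]
    rcases Nat.even_or_odd m with ⟨k, hk⟩ | ⟨k, hk⟩
    · rw [show (m+1+1)/2 = k+1 by omega, show (m+1)/2 = k by omega, show m/2 = k by omega,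
        show m+1 = 2*k+1 by omega, Finset.sum_range_succ]
      ring
    · rw [show (m+1+1)/2 = k+1 by omega, show (m+1)/2 = k+1 by omega, show m/2 = k by omega,
        show m+1 = 2*k+2 by omega, Finset.sum_range_succ, Finset.sum_range_succ]
      ring

/-- composing a Cesàro-type limit with an index sequence growing like `n/2` -/
lemma aux_comp_half (S : ℕ → ℝ) (L : ℝ) (c : ℕ → ℕ)
    (hc : ∀ n, 2 * c n ≤ n ∧ n ≤ 2 * c n + 2)
    (h : Tendsto (fun n : ℕ => S n / n) atTop (nhds L)) :
    Tendsto (fun n : ℕ => S (c n) / n) atTop (nhds (L/2)) := by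
  have hcat : Tendsto c atTop atTop :=
    tendsto_atTop_atTop.2 fun b => ⟨2*b+2, fun n hn => by have := (hc n).2; omega⟩
  have h1 : Tendsto (fun n : ℕ => S (c n) / (c n)) atTop (nhds L) := h.comp hcat
  have h2 := aux_half_limit c hc
  have h3 := h1.mul h2
  rw [show L * (1/2) = L/2 by ring] at h3
  apply h3.congr'
  filter_upwards [hcat.eventually (eventually_ge_atTop 1)] with n hn
  have hc0 : ((c n : ℕ):ℝ) ≠ 0 := by
    have : (1:ℕ) ≤ c n := hn
    positivity
  by_cases hn0 : n = 0
  · exfalso; have := (hc n).1; omega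
  · have hnr : ((n:ℕ):ℝ) ≠ 0 := Nat.cast_ne_zero.2 hn0
    field_simp

/-- if `(Ỹ_i)` are i.i.d. Bernoulli(1/2) random variables and
`T_n = n - 2 Σ_{i=1}^{n-1} (1 - Ỹ_i) Ỹ_{i+1} - Ỹ_1`, then `T_n / n → 1/2` almost surely. -/
theorem bernoulli_Tn_lln
    {Ω : Type*} [MeasureSpace Ω] [IsProbabilityMeasure (ℙ : Measure Ω)]
    (Y : ℕ → Ω → ℝ)
    (hmeas : ∀ i, Measurable (Y i))
    (hindep : iIndepFun Y ℙ)
    (hdist : ∀ i, ℙ {ω | Y i ω = 1} = 1 / 2 ∧ ℙ {ω | Y i ω = 0} = 1 / 2) :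
    ∀ᵐ ω ∂(ℙ : Measure Ω),
      Tendsto
        (fun n : ℕ =>
          ((n : ℝ) - 2 * ∑ i ∈ Finset.Icc 1 (n - 1), (1 - Y i ω) * Y (i + 1) ω - Y 1 ω) / n)
        atTop (nhds (1 / 2)) := by
  -- each `Y i` is a.s. `{0,1}`-valued
  have hY01 : ∀ i, ∀ᵐ ω ∂(ℙ : Measure Ω), Y i ω = 0 ∨ Y i ω = 1 := by
    intro i
    have hm1 : MeasurableSet {ω | Y i ω = 1} := (hmeas i) (measurableSet_singleton 1)
    have hm0 : MeasurableSet {ω | Y i ω = 0} := (hmeas i) (measurableSet_singleton 0)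
    have hdisj : Disjoint {ω | Y i ω = 0} {ω | Y i ω = 1} := by
      rw [Set.disjoint_left]
      rintro ω hω0 hω1
      exact zero_ne_one ((Set.mem_setOf_eq ▸ hω0).symm.trans (Set.mem_setOf_eq ▸ hω1))
    have hunion : ℙ ({ω | Y i ω = 0} ∪ {ω | Y i ω = 1}) = 1 := by
      rw [measure_union hdisj hm1, (hdist i).2, (hdist i).1, ENNReal.div_add_div_same,
        show (1:ℝ≥0∞)+1 = 2 by norm_num, ENNReal.div_self] <;> norm_num
    have hset : {ω | ¬(Y i ω = 0 ∨ Y i ω = 1)} = ({ω | Y i ω = 0} ∪ {ω | Y i ω = 1})ᶜ := by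
      ext ω; simp [not_or]
    rw [ae_iff, hset]
    exact (prob_compl_eq_zero_iff (hm0.union hm1)).2 hunion
  -- key distributional facts for products `(1 - Y a) * Y b`
  have key : ∀ a b : ℕ, a ≠ b →
      ℙ {ω | (1 - Y a ω) * Y b ω = 1} = 1/4 ∧ ℙ {ω | (1 - Y a ω) * Y b ω = 0} = 3/4 := by
    intro a b hab
    have h1eq : {ω | (1 - Y a ω) * Y b ω = 1} =ᵐ[ℙ] (((Y a ⁻¹' {0} ∩ Y b ⁻¹' {1}) : Set Ω)) := by
      rw [Filter.eventuallyEq_set]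
      filter_upwards [hY01 a, hY01 b] with ω ha hb
      constructor
      · intro h
        rcases ha with ha | ha <;> rcases hb with hb | hb
        · rw [ha, hb] at h; norm_num at h
        · exact ⟨ha, hb⟩
        · rw [ha, hb] at h; norm_num at h
        · rw [ha, hb] at h; norm_num at h
      · rintro ⟨h0, h1⟩
        simp only [Set.mem_preimage, Set.mem_singleton_iff] at h0 h1
        simp [Set.mem_setOf_eq, h0, h1]
    have hval1 : ℙ {ω | (1 - Y a ω) * Y b ω = 1} = 1/4 := by
      rw [measure_congr h1eq,
        (hindep.indepFun hab).measure_inter_preimage_eq_mul {0} {1}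
          (measurableSet_singleton 0) (measurableSet_singleton 1)]
      have h0 : Y a ⁻¹' {0} = {ω | Y a ω = 0} := rfl
      have h1 : Y b ⁻¹' {1} = {ω | Y b ω = 1} := rfl
      rw [h0, h1, (hdist a).2, (hdist b).1,
        show (1/2 : ℝ≥0∞) = 2⁻¹ by rw [one_div],
        ← ENNReal.mul_inv (by norm_num) (by norm_num)]
      norm_num [one_div]
    refine ⟨hval1, ?_⟩
    have hmeasP : Measurable fun ω => (1 - Y a ω) * Y b ω :=
      (measurable_const.sub (hmeas a)).mul (hmeas b)
    have hm1 : MeasurableSet {ω | (1 - Y a ω) * Y b ω = 1} :=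
      hmeasP (measurableSet_singleton 1)
    have hcompl : ({ω | (1 - Y a ω) * Y b ω = 0} : Set Ω) =ᵐ[ℙ] ({ω | (1 - Y a ω) * Y b ω = 1}ᶜ : Set Ω) := by
      rw [Filter.eventuallyEq_set]
      filter_upwards [hY01 a, hY01 b] with ω ha hb
      show (1 - Y a ω) * Y b ω = 0 ↔ ¬((1 - Y a ω) * Y b ω = 1)
      rcases ha with ha | ha <;> rcases hb with hb | hb <;> rw [ha, hb] <;> norm_num
    have h34 : (3/4 : ℝ≥0∞) + 1/4 = 1 := by
      rw [ENNReal.div_add_div_same, show (3:ℝ≥0∞)+1 = 4 by norm_num, ENNReal.div_self] <;>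
        norm_num
    rw [measure_congr hcompl, measure_compl hm1 (measure_ne_top _ _), hval1, measure_univ]
    exact ENNReal.sub_eq_of_eq_add (by norm_num) h34.symm
  -- the two auxiliary i.i.d. sequences
  set A : ℕ → Ω → ℝ := fun k ω => (1 - Y (2*k+1) ω) * Y (2*k+2) ω with hA_def
  set B : ℕ → Ω → ℝ := fun k ω => (1 - Y (2*k+2) ω) * Y (2*k+3) ω with hB_def
  have hAmeas : ∀ k, Measurable (A k) := fun k =>
    (measurable_const.sub (hmeas _)).mul (hmeas _)
  have hBmeas : ∀ k, Measurable (B k) := fun k =>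
    (measurable_const.sub (hmeas _)).mul (hmeas _)
  have hq34 : (3/4 : ℝ≥0∞) + 1/4 = 1 := by
    rw [ENNReal.div_add_div_same, show (3:ℝ≥0∞)+1 = 4 by norm_num, ENNReal.div_self] <;> norm_num
  have hgmeas : Measurable (fun p : ℝ × ℝ => (1 - p.1) * p.2) := by fun_prop
  -- identical distribution
  have hAmap : ∀ k, Measure.map (A k) ℙ = (3/4 : ℝ≥0∞) • Measure.dirac (0:ℝ) + (1/4 : ℝ≥0∞) • Measure.dirac 1 :=
    fun k => aux_bern_map (A k) (hAmeas k) (1/4) (3/4)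
      (key (2*k+1) (2*k+2) (by omega)).1 (key (2*k+1) (2*k+2) (by omega)).2 hq34
  have hBmap : ∀ k, Measure.map (B k) ℙ = (3/4 : ℝ≥0∞) • Measure.dirac (0:ℝ) + (1/4 : ℝ≥0∞) • Measure.dirac 1 :=
    fun k => aux_bern_map (B k) (hBmeas k) (1/4) (3/4)
      (key (2*k+2) (2*k+3) (by omega)).1 (key (2*k+2) (2*k+3) (by omega)).2 hq34
  have hAident : ∀ k, IdentDistrib (A k) (A 0) ℙ ℙ := fun k =>
    ⟨(hAmeas k).aemeasurable, (hAmeas 0).aemeasurable, by rw [hAmap k, hAmap 0]⟩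
  have hBident : ∀ k, IdentDistrib (B k) (B 0) ℙ ℙ := fun k =>
    ⟨(hBmeas k).aemeasurable, (hBmeas 0).aemeasurable, by rw [hBmap k, hBmap 0]⟩
  -- pairwise independence
  have hAindep : Pairwise (Function.onFun (IndepFun · · ℙ) A) := by
    intro k l hkl
    exact (hindep.indepFun_prodMk_prodMk hmeas (2*k+1) (2*k+2) (2*l+1) (2*l+2)
      (by omega) (by omega) (by omega) (by omega)).comp hgmeas hgmeas
  have hBindep : Pairwise (Function.onFun (IndepFun · · ℙ) B) := by
    intro k l hkl
    exact (hindep.indepFun_prodMk_prodMk hmeas (2*k+2) (2*k+3) (2*l+2) (2*l+3)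
      (by omega) (by omega) (by omega) (by omega)).comp hgmeas hgmeas
  -- integrability
  have hbound : ∀ a b : ℕ, ∀ᵐ ω ∂(ℙ : Measure Ω), ‖(1 - Y a ω) * Y b ω‖ ≤ 1 := by
    intro a b
    filter_upwards [hY01 a, hY01 b] with ω ha hb
    rcases ha with ha | ha <;> rcases hb with hb | hb <;> simp [ha, hb]
  have hAint : Integrable (A 0) ℙ :=
    ⟨(hAmeas 0).aestronglyMeasurable, HasFiniteIntegral.of_bounded (hbound (2*0+1) (2*0+2))⟩
  have hBint : Integrable (B 0) ℙ :=
    ⟨(hBmeas 0).aestronglyMeasurable, HasFiniteIntegral.of_bounded (hbound (2*0+2) (2*0+3))⟩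
  -- expectations
  have hExp : ∀ f : Ω → ℝ, Measurable f →
      Measure.map f ℙ = (3/4 : ℝ≥0∞) • Measure.dirac (0:ℝ) + (1/4 : ℝ≥0∞) • Measure.dirac 1 →
      ∫ ω, f ω ∂(ℙ : Measure Ω) = 1/4 := by
    intro f hf hmap
    have : ∫ ω, f ω ∂(ℙ : Measure Ω) = ∫ x, id x ∂(Measure.map f ℙ) :=
      (integral_map hf.aemeasurable aestronglyMeasurable_id).symm
    rw [this, hmap, integral_add_measure, integral_smul_measure, integral_smul_measure,
      integral_dirac, integral_dirac]
    · simp [ENNReal.toReal_div]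
    · exact ((integrable_const _).congr (ae_eq_dirac id).symm).smul_measure
        (by intro h; rw [ENNReal.div_eq_top] at h; norm_num at h)
    · exact ((integrable_const _).congr (ae_eq_dirac id).symm).smul_measure
        (by intro h; rw [ENNReal.div_eq_top] at h; norm_num at h)
  have hEA : ∫ ω, A 0 ω ∂(ℙ : Measure Ω) = 1/4 := hExp (A 0) (hAmeas 0) (hAmap 0)
  have hEB : ∫ ω, B 0 ω ∂(ℙ : Measure Ω) = 1/4 := hExp (B 0) (hBmeas 0) (hBmap 0)
  -- strong law of large numbers for both sequences
  have hSLA := strong_law_ae_real A hAint hAindep hAident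
  have hSLB := strong_law_ae_real B hBint hBindep hBident
  rw [hEA] at hSLA
  rw [hEB] at hSLB
  filter_upwards [hSLA, hSLB] with ω hTA hTB
  -- decompose the sum
  have hsum : ∀ n : ℕ, ∑ i ∈ Finset.Icc 1 (n-1), (1 - Y i ω) * Y (i+1) ω =
      (∑ k ∈ Finset.range (n/2), A k ω) + ∑ k ∈ Finset.range ((n-1)/2), B k ω := by
    intro n
    rw [aux_sum_split (fun i => (1 - Y i ω) * Y (i+1) ω) (n-1),
      show (n-1+1)/2 = n/2 by omega]
  -- limits of the two normalized partial sums
  have hA' : Tendsto (fun n : ℕ => (∑ k ∈ Finset.range (n/2), A k ω) / n) atTop (nhds ((1/4)/2)) :=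
    aux_comp_half (fun m => ∑ k ∈ Finset.range m, A k ω) (1/4) (fun n => n/2)
      (fun n => by show 2*(n/2) ≤ n ∧ n ≤ 2*(n/2)+2; omega) hTA
  have hB' : Tendsto (fun n : ℕ => (∑ k ∈ Finset.range ((n-1)/2), B k ω) / n) atTop
      (nhds ((1/4)/2)) :=
    aux_comp_half (fun m => ∑ k ∈ Finset.range m, B k ω) (1/4) (fun n => (n-1)/2)
      (fun n => by show 2*((n-1)/2) ≤ n ∧ n ≤ 2*((n-1)/2)+2; omega) hTB
  have hY1 : Tendsto (fun n : ℕ => Y 1 ω / n) atTop (nhds 0) :=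
    tendsto_const_div_atTop_nhds_zero_nat (Y 1 ω)
  have hfinal := (((tendsto_const_nhds (x := (1:ℝ)) (f := atTop)).sub
    (hA'.const_mul 2)).sub (hB'.const_mul 2)).sub hY1
  rw [show (1:ℝ) - 2*((1/4)/2) - 2*((1/4)/2) - 0 = 1/2 by norm_num] at hfinal
  apply hfinal.congr'
  filter_upwards [eventually_ge_atTop 1] with n hn
  have hn0 : ((n:ℕ):ℝ) ≠ 0 := Nat.cast_ne_zero.2 (by omega)
  rw [hsum n]
  field_simp
  ring
end

section
/- Let 0 < p < 1 and let X_1, X_2, … be i.i.d. random variables with P(X_i = 1) = p and P(X_i = 0) = 1 − p. For each n ≥ 2 let A^{(n)} be the random n×n symmetric 0/1 matrix with A^{(n)}[i,j] = 1 if and only if i ≠ j and X_i + X_j ≥ 1. Then, almost surely, the empirical spectral distribution of A^{(n)} converges weakly, as n → ∞, to p·δ_{−1} + (1 − p)·δ_0. -/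
open MeasureTheory ProbabilityTheory Filter

section AuxLemmas
open Polynomial Matrix

theorem my_charpoly_conj {n R : Type*} [Fintype n] [DecidableEq n] [CommRing R]
    (U V D : Matrix n n R) (hUV : U * V = 1) :
    (U * D * V).charpoly = D.charpoly := by
  have hc : charmatrix (U * D * V)
      = (C : R →+* R[X]).mapMatrix U * charmatrix D * (C : R →+* R[X]).mapMatrix V := by
    unfold charmatrix
    rw [Matrix.mul_sub, Matrix.sub_mul, _root_.map_mul, _root_.map_mul]
    congr 1
    rw [scalar_apply, ← smul_one_eq_diagonal, Matrix.mul_smul, Matrix.smul_mul, mul_one,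
      ← _root_.map_mul, hUV, _root_.map_one, smul_one_eq_diagonal]
  have hdet : ((C : R →+* R[X]).mapMatrix U).det * ((C : R →+* R[X]).mapMatrix V).det = 1 := by
    rw [← det_mul, ← _root_.map_mul, hUV, _root_.map_one, det_one]
  unfold Matrix.charpoly
  rw [hc, det_mul, det_mul]
  calc (C.mapMatrix U).det * (charmatrix D).det * (C.mapMatrix V).det
      = (C.mapMatrix U).det * (C.mapMatrix V).det * (charmatrix D).det := by ring
    _ = (charmatrix D).det := by rw [hdet, one_mul]

theorem my_charpoly_diagonal {n R : Type*} [Fintype n] [DecidableEq n] [CommRing R]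
    (d : n → R) : (Matrix.diagonal d).charpoly = ∏ i, (X - C (d i)) := by
  have h : charmatrix (Matrix.diagonal d) = Matrix.diagonal fun i => X - C (d i) := by
    ext i j
    by_cases h : i = j
    · subst h; simp [charmatrix_apply_eq]
    · simp [charmatrix_apply_ne _ _ _ h, Matrix.diagonal_apply_ne _ h]
  rw [Matrix.charpoly, h, det_diagonal]

variable {n : Type*} [Fintype n] [DecidableEq n] {A : Matrix n n ℝ} (hA : A.IsHermitian)

theorem my_charpoly_eq : A.charpoly = ∏ i, (X - C (hA.eigenvalues i)) := by
  have hU : (hA.eigenvectorUnitary : Matrix n n ℝ) * (star hA.eigenvectorUnitary : Matrix n n ℝ) = 1 :=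
    (Matrix.mem_unitaryGroup_iff).mp hA.eigenvectorUnitary.2
  conv_lhs => rw [hA.spectral_theorem, Unitary.conjStarAlgAut_apply]
  rw [my_charpoly_conj _ _ _ hU]
  have : (RCLike.ofReal ∘ hA.eigenvalues : n → ℝ) = hA.eigenvalues := by
    ext i; simp
  rw [this, my_charpoly_diagonal]

theorem my_roots_charpoly : A.charpoly.roots = Finset.univ.val.map hA.eigenvalues := by
  rw [my_charpoly_eq hA]
  have : ∏ i, (X - C (hA.eigenvalues i))
      = ((Finset.univ.val.map hA.eigenvalues).map fun a => X - C a).prod := by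
    rw [Multiset.map_map]; rfl
  rw [this, roots_multiset_prod_X_sub_C]

theorem my_rank_sub : ∀ (lam : ℝ), (A - lam • 1).rank = Fintype.card {i // hA.eigenvalues i ≠ lam} := by
  intro lam
  have hU : (hA.eigenvectorUnitary : Matrix n n ℝ) * (star hA.eigenvectorUnitary : Matrix n n ℝ) = 1 :=
    (Matrix.mem_unitaryGroup_iff).mp hA.eigenvectorUnitary.2
  have hdetU : IsUnit (hA.eigenvectorUnitary : Matrix n n ℝ).det := by
    apply IsUnit.of_mul_eq_one (star hA.eigenvectorUnitary : Matrix n n ℝ).det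
    rw [← det_mul, hU, det_one]
  have hdetV : IsUnit (star hA.eigenvectorUnitary : Matrix n n ℝ).det := by
    apply IsUnit.of_mul_eq_one (hA.eigenvectorUnitary : Matrix n n ℝ).det
    rw [← det_mul, (Matrix.mem_unitaryGroup_iff').mp hA.eigenvectorUnitary.2, det_one]
  have key : A - lam • 1 = (hA.eigenvectorUnitary : Matrix n n ℝ)
      * Matrix.diagonal (fun i => hA.eigenvalues i - lam)
      * (star hA.eigenvectorUnitary : Matrix n n ℝ) := by
    have h2 : (Matrix.diagonal (fun i => hA.eigenvalues i - lam) : Matrix n n ℝ)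
        = Matrix.diagonal hA.eigenvalues - lam • 1 := by
      ext i j
      rcases eq_or_ne i j with h | h
      · subst h; simp
      · simp [Matrix.diagonal_apply_ne _ h, Matrix.one_apply_ne h]
    have h3 : (Matrix.diagonal (RCLike.ofReal ∘ hA.eigenvalues) : Matrix n n ℝ)
        = Matrix.diagonal hA.eigenvalues := by
      congr 1
    rw [h2, Matrix.mul_sub, Matrix.sub_mul, Matrix.mul_smul, Matrix.smul_mul, mul_one, hU,
      ← h3]
    conv_lhs => rw [hA.spectral_theorem, Unitary.conjStarAlgAut_apply]
  rw [key, rank_mul_eq_left_of_isUnit_det _ _ hdetV, rank_mul_eq_right_of_isUnit_det _ _ hdetU,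
    rank_diagonal]
  apply Fintype.card_congr
  apply Equiv.subtypeEquivRight
  intro i
  simp [sub_ne_zero]

theorem my_ker_ge {n : ℕ} (B : Matrix (Fin n) (Fin n) ℝ) (S : Finset (Fin n)) (c : Fin n → ℝ)
    (h : ∀ i ∈ S, B *ᵥ Pi.single i 1 = c) :
    S.card ≤ Module.finrank ℝ (LinearMap.ker B.mulVecLin) + 1 := by
  rcases S.eq_empty_or_nonempty with rfl | ⟨i0, hi0⟩
  · simp
  set K := LinearMap.ker B.mulVecLin with hK
  have hker : ∀ i ∈ S, Pi.single i 1 - Pi.single i0 1 ∈ K := by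
    intro i hi
    simp only [hK, LinearMap.mem_ker, map_sub, Matrix.mulVecLin_apply, h i hi, h i0 hi0, sub_self]
  set v : {i // i ∈ S.erase i0} → K :=
    fun s => ⟨Pi.single (s : Fin n) 1 - Pi.single i0 1, hker s (Finset.mem_of_mem_erase s.2)⟩
    with hv
  have hindep : LinearIndependent ℝ v := by
    apply LinearIndependent.of_comp K.subtype
    rw [Fintype.linearIndependent_iff]
    intro g hg s
    have h1 := congrFun hg (s : Fin n)
    rw [Finset.sum_apply] at h1
    have hsi0 : (s : Fin n) ≠ i0 := Finset.ne_of_mem_erase s.2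
    have h2 : ∀ t ∈ Finset.univ,
        (g t • ((K.subtype ∘ v) t)) (s : Fin n) = if t = s then g s else 0 := by
      intro t _
      rcases eq_or_ne t s with rfl | hts
      · simp [hv, Pi.single_apply, hsi0]
      · have hts' : (s : Fin n) ≠ (t : Fin n) := fun hc => hts (Subtype.ext hc.symm)
        simp [hv, Pi.single_apply, hts', hsi0, hts]
    rw [Finset.sum_congr rfl h2, Finset.sum_ite_eq' Finset.univ s (fun _ => g s)] at h1
    simpa using h1
  have hcard := hindep.fintype_card_le_finrank
  have hc2 : Fintype.card {i // i ∈ S.erase i0} = (S.erase i0).card := Fintype.card_coe _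
  have hE : (S.erase i0).card = S.card - 1 := Finset.card_erase_of_mem hi0
  have hS1 : 1 ≤ S.card := Finset.card_pos.mpr ⟨i0, hi0⟩
  omega

end AuxLemmas

section KeyBound
open Polynomial Matrix

theorem key_bound (n : ℕ) (hn : 1 ≤ n) (x : ℕ → ℕ) (f : BoundedContinuousFunction ℝ ℝ) :
    |(∫ y, f y ∂ esd (Matrix.of fun i j : Fin n =>
        if i ≠ j ∧ 1 ≤ x i + x j then (1 : ℝ) else 0))
      - ((((Finset.univ.filter fun i : Fin n => 1 ≤ x i).card : ℝ) / n) * f (-1)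
        + (1 - ((Finset.univ.filter fun i : Fin n => 1 ≤ x i).card : ℝ) / n) * f 0)|
      ≤ 4 * ‖f‖ / n := by
  set A : Matrix (Fin n) (Fin n) ℝ := Matrix.of fun i j : Fin n =>
      if i ≠ j ∧ 1 ≤ x i + x j then (1 : ℝ) else 0 with hA
  have hherm : A.IsHermitian := by
    ext i j
    simp only [Matrix.conjTranspose_apply, hA, Matrix.of_apply, star_trivial]
    apply if_congr _ rfl rfl
    constructor <;> rintro ⟨h1, h2⟩ <;> exact ⟨Ne.symm h1, by omega⟩
  set E : Fin n → ℝ := hherm.eigenvalues with hE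
  set s : Finset (Fin n) := Finset.univ.filter (fun i : Fin n => 1 ≤ x i) with hs
  set F1 : Finset (Fin n) := Finset.univ.filter (fun i : Fin n => E i = -1) with hF1
  set F0 : Finset (Fin n) := Finset.univ.filter (fun i : Fin n => E i = 0) with hF0
  -- integral formula
  have hesd : esd A = (n : ENNReal)⁻¹ • ∑ i : Fin n, Measure.dirac (E i) := by
    rw [esd, my_roots_charpoly hherm, Multiset.map_map]
    rfl
  have hint : ∫ y, f y ∂ esd A = (n : ℝ)⁻¹ * ∑ i, f (E i) := by
    rw [hesd, integral_smul_measure, integral_finset_sum_measure (fun i _ => f.integrable _)]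
    simp [integral_dirac, ENNReal.toReal_inv]
  -- counting: -1 eigenvalues
  have hcount : ∀ (lam : ℝ) (S : Finset (Fin n)) (c : Fin n → ℝ),
      (∀ i ∈ S, (A - lam • 1) *ᵥ Pi.single i 1 = c) →
      S.card ≤ (Finset.univ.filter fun i : Fin n => E i = lam).card + 1 := by
    intro lam S c hvec
    have h1 := my_ker_ge _ S c hvec
    have h2 := my_rank_sub hherm lam
    have h3 : (A - lam • 1).rank + Module.finrank ℝ (LinearMap.ker (A - lam • 1).mulVecLin)
        = n := by
      rw [Matrix.rank, LinearMap.finrank_range_add_finrank_ker,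
        Module.finrank_fintype_fun_eq_card, Fintype.card_fin]
    have h4 : Fintype.card {i // hherm.eigenvalues i ≠ lam}
        = Fintype.card (Fin n) - Fintype.card {i // hherm.eigenvalues i = lam} :=
      Fintype.card_subtype_compl _
    have h5 : Fintype.card {i // hherm.eigenvalues i = lam}
        = (Finset.univ.filter fun i : Fin n => E i = lam).card := Fintype.card_subtype _
    have h6 : Fintype.card {i // hherm.eigenvalues i = lam} ≤ Fintype.card (Fin n) :=
      Fintype.card_subtype_le _
    have h7 : Fintype.card (Fin n) = n := Fintype.card_fin n
    omega
  have hk1 : s.card ≤ F1.card + 1 := by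
    apply hcount (-1) s (fun _ => 1)
    intro i hi
    have hxi : 1 ≤ x i := (Finset.mem_filter.mp hi).2
    have : A - (-1 : ℝ) • 1 = A + 1 := by simp
    rw [this, mulVec_single_one]
    funext l
    simp only [Matrix.col_apply, Matrix.add_apply, hA, Matrix.of_apply, Matrix.one_apply, mul_one]
    rcases eq_or_ne l i with rfl | hne
    · simp
    · rw [if_pos ⟨hne, by omega⟩, if_neg hne]; norm_num
  have hk0 : (Finset.univ.filter fun i : Fin n => ¬ 1 ≤ x i).card ≤ F0.card + 1 := by
    apply hcount 0 _ (fun l => if 1 ≤ x l then 1 else 0)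
    intro i hi
    have hxi : ¬ 1 ≤ x i := (Finset.mem_filter.mp hi).2
    have : A - (0 : ℝ) • 1 = A := by simp
    rw [this, mulVec_single_one]
    funext l
    simp only [Matrix.col_apply, hA, Matrix.of_apply, mul_one]
    rcases eq_or_ne l i with rfl | hne
    · rw [if_neg (by tauto), if_neg (by omega)]
    · apply if_congr _ rfl rfl
      constructor
      · rintro ⟨-, h2⟩; omega
      · intro h; exact ⟨hne, by omega⟩
  have hst : s.card + (Finset.univ.filter fun i : Fin n => ¬ 1 ≤ x i).card = n := by
    rw [hs, Finset.card_filter_add_card_filter_not, Finset.card_univ, Fintype.card_fin]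
  -- sum decomposition
  have hsplit1 : ∑ i, f (E i)
      = ∑ i ∈ F1, f (E i) + ∑ i ∈ Finset.univ.filter (fun i => ¬ E i = -1), f (E i) :=
    (Finset.sum_filter_add_sum_filter_not _ _ _).symm
  have hsplit2 : ∑ i ∈ Finset.univ.filter (fun i => ¬ E i = -1), f (E i)
      = ∑ i ∈ (Finset.univ.filter (fun i => ¬ E i = -1)).filter (fun i => E i = 0), f (E i)
        + ∑ i ∈ (Finset.univ.filter (fun i => ¬ E i = -1)).filter (fun i => ¬ E i = 0), f (E i) :=
    (Finset.sum_filter_add_sum_filter_not _ _ _).symm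
  have hFF0 : (Finset.univ.filter (fun i => ¬ E i = -1)).filter (fun i => E i = 0) = F0 := by
    rw [Finset.filter_filter, hF0]
    apply Finset.filter_congr
    intro i _
    constructor
    · rintro ⟨-, h⟩; exact h
    · intro h; exact ⟨by rw [h]; norm_num, h⟩
  set Fr : Finset (Fin n) :=
    (Finset.univ.filter (fun i => ¬ E i = -1)).filter (fun i => ¬ E i = 0) with hFr
  have hcards : F1.card + (F0.card + Fr.card) = n := by
    have u1 : F1.card + (Finset.univ.filter (fun i => ¬ E i = -1)).card = n := by
      rw [hF1, Finset.card_filter_add_card_filter_not, Finset.card_univ, Fintype.card_fin]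
    have u2 : F0.card + Fr.card = (Finset.univ.filter (fun i => ¬ E i = -1)).card := by
      rw [← hFF0, hFr, Finset.card_filter_add_card_filter_not]
    omega
  have hsum : ∑ i, f (E i)
      = (F1.card : ℝ) * f (-1) + (F0.card : ℝ) * f 0 + ∑ i ∈ Fr, f (E i) := by
    rw [hsplit1, hsplit2, hFF0]
    have e1 : ∑ i ∈ F1, f (E i) = (F1.card : ℝ) * f (-1) := by
      rw [Finset.sum_congr rfl (fun i hi => by
        rw [(Finset.mem_filter.mp hi).2]), Finset.sum_const, nsmul_eq_mul]
    have e0 : ∑ i ∈ F0, f (E i) = (F0.card : ℝ) * f 0 := by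
      rw [Finset.sum_congr rfl (fun i hi => by
        rw [(Finset.mem_filter.mp hi).2]), Finset.sum_const, nsmul_eq_mul]
    rw [e1, e0]; ring
  -- real arithmetic
  have hnR : (0 : ℝ) < n := by exact_mod_cast hn
  have hfn : |f (-1)| ≤ ‖f‖ := by
    have := f.norm_coe_le_norm (-1); rwa [Real.norm_eq_abs] at this
  have hf0 : |f 0| ≤ ‖f‖ := by
    have := f.norm_coe_le_norm 0; rwa [Real.norm_eq_abs] at this
  have hfnn : (0:ℝ) ≤ ‖f‖ := norm_nonneg f
  have hR : |∑ i ∈ Fr, f (E i)| ≤ 2 * ‖f‖ := by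
    calc |∑ i ∈ Fr, f (E i)| ≤ ∑ i ∈ Fr, |f (E i)| := Finset.abs_sum_le_sum_abs _ _
      _ ≤ ∑ _i ∈ Fr, ‖f‖ := Finset.sum_le_sum (fun i _ => by
          have := f.norm_coe_le_norm (E i); rwa [Real.norm_eq_abs] at this)
      _ = (Fr.card : ℝ) * ‖f‖ := by rw [Finset.sum_const, nsmul_eq_mul]
      _ ≤ 2 * ‖f‖ := by
          apply mul_le_mul_of_nonneg_right _ hfnn
          have : Fr.card ≤ 2 := by omega
          exact_mod_cast this
  have hk1' : F1.card ≤ s.card + 1 := by omega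
  have hk0' : F0.card ≤ (Finset.univ.filter fun i : Fin n => ¬ 1 ≤ x i).card + 1 := by omega
  have ha : |(F1.card : ℝ) - (s.card : ℝ)| ≤ 1 := by
    have c1 : (s.card : ℝ) ≤ (F1.card : ℝ) + 1 := by exact_mod_cast hk1
    have c2 : (F1.card : ℝ) ≤ (s.card : ℝ) + 1 := by exact_mod_cast hk1'
    rw [abs_le]; constructor <;> linarith
  have htc : ((Finset.univ.filter fun i : Fin n => ¬ 1 ≤ x i).card : ℝ) = (n : ℝ) - s.card := by
    have := hst
    have : ((s.card : ℝ)) + ((Finset.univ.filter fun i : Fin n => ¬ 1 ≤ x i).card : ℝ) = n := by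
      exact_mod_cast hst
    linarith
  have hb : |(F0.card : ℝ) - ((n : ℝ) - s.card)| ≤ 1 := by
    have c1 : ((Finset.univ.filter fun i : Fin n => ¬ 1 ≤ x i).card : ℝ) ≤ (F0.card : ℝ) + 1 := by
      exact_mod_cast hk0
    have c2 : (F0.card : ℝ) ≤ ((Finset.univ.filter fun i : Fin n => ¬ 1 ≤ x i).card : ℝ) + 1 := by
      exact_mod_cast hk0'
    rw [abs_le]; constructor <;> linarith
  have hdiff : ∫ y, f y ∂ esd A - (((s.card : ℝ)/n) * f (-1) + (1 - (s.card : ℝ)/n) * f 0)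
      = (n:ℝ)⁻¹ * (((F1.card:ℝ) - s.card) * f (-1)
        + ((F0.card:ℝ) - ((n:ℝ) - s.card)) * f 0 + ∑ i ∈ Fr, f (E i)) := by
    rw [hint, hsum]
    field_simp
    ring
  rw [hdiff, abs_mul, abs_of_nonneg (inv_nonneg.mpr hnR.le)]
  have e1 : |((F1.card:ℝ) - s.card) * f (-1)| ≤ ‖f‖ := by
    rw [abs_mul]
    calc |(F1.card:ℝ) - s.card| * |f (-1)| ≤ 1 * ‖f‖ :=
          mul_le_mul ha hfn (abs_nonneg _) zero_le_one
      _ = ‖f‖ := one_mul _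
  have e2 : |((F0.card:ℝ) - ((n:ℝ) - s.card)) * f 0| ≤ ‖f‖ := by
    rw [abs_mul]
    calc |(F0.card:ℝ) - ((n:ℝ) - s.card)| * |f 0| ≤ 1 * ‖f‖ :=
          mul_le_mul hb hf0 (abs_nonneg _) zero_le_one
      _ = ‖f‖ := one_mul _
  have hbound : |((F1.card:ℝ) - s.card) * f (-1)
      + ((F0.card:ℝ) - ((n:ℝ) - s.card)) * f 0 + ∑ i ∈ Fr, f (E i)| ≤ 4 * ‖f‖ := by
    have t1 := abs_add_le (((F1.card:ℝ) - s.card) * f (-1)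
      + ((F0.card:ℝ) - ((n:ℝ) - s.card)) * f 0) (∑ i ∈ Fr, f (E i))
    have t2 := abs_add_le (((F1.card:ℝ) - s.card) * f (-1))
      (((F0.card:ℝ) - ((n:ℝ) - s.card)) * f 0)
    linarith
  calc (n:ℝ)⁻¹ * |((F1.card:ℝ) - s.card) * f (-1)
        + ((F0.card:ℝ) - ((n:ℝ) - s.card)) * f 0 + ∑ i ∈ Fr, f (E i)|
      ≤ (n:ℝ)⁻¹ * (4 * ‖f‖) := mul_le_mul_of_nonneg_left hbound (inv_nonneg.mpr hnR.le)
    _ = 4 * ‖f‖ / n := by ring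

end KeyBound

/-- for the binary threshold model `G_n(p)` (i.i.d. Bernoulli(p) hidden
variables `X_i`, vertices `i ≠ j` adjacent iff `X_i + X_j ≥ 1`), the empirical spectral
distribution of the adjacency matrix converges weakly, almost surely, to
`p·δ_{-1} + (1-p)·δ_0`. -/
theorem binaryThresholdModel_esd_tendsto
    {Ω : Type*} [MeasureSpace Ω] [IsProbabilityMeasure (ℙ : Measure Ω)]
    (p : ℝ) (hp0 : 0 < p) (hp1 : p < 1) (X : ℕ → Ω → ℕ)
    (hmeas : ∀ i, Measurable (X i))
    (hindep : iIndepFun X ℙ)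
    (hdist : ∀ i, ℙ {ω | X i ω = 1} = ENNReal.ofReal p ∧
                  ℙ {ω | X i ω = 0} = ENNReal.ofReal (1 - p)) :
    ∀ᵐ ω ∂(ℙ : Measure Ω), ∀ f : BoundedContinuousFunction ℝ ℝ,
      Tendsto
        (fun n : ℕ => ∫ x, f x ∂ esd (Matrix.of fun i j : Fin n =>
          if i ≠ j ∧ 1 ≤ X i ω + X j ω then (1 : ℝ) else 0))
        atTop
        (nhds (p * f (-1) + (1 - p) * f 0)) := by
  -- the indicator variables
  set Y : ℕ → Ω → ℝ := fun i ω => if 1 ≤ X i ω then 1 else 0 with hY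
  have hsetmeas : ∀ i, MeasurableSet {ω | 1 ≤ X i ω} := by
    intro i
    exact hmeas i (by trivial : MeasurableSet {k : ℕ | 1 ≤ k})
  have hYmeas : ∀ i, Measurable (Y i) := by
    intro i
    exact Measurable.ite (hsetmeas i) measurable_const measurable_const
  have hprob : ∀ i, ℙ {ω | 1 ≤ X i ω} = ENNReal.ofReal p := by
    intro i
    have hc : {ω | 1 ≤ X i ω} = {ω | X i ω = 0}ᶜ := by
      ext ω; simp [Nat.one_le_iff_ne_zero]
    have hm0 : MeasurableSet {ω | X i ω = 0} := hmeas i (by trivial : MeasurableSet {k : ℕ | k = 0})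
    rw [hc, prob_compl_eq_one_sub hm0, (hdist i).2]
    rw [← ENNReal.ofReal_one, ← ENNReal.ofReal_sub _ (by linarith)]
    norm_num
  -- integrability and expectation
  have hYind : ∀ i, Y i = Set.indicator {ω | 1 ≤ X i ω} (fun _ => (1:ℝ)) := by
    intro i; funext ω
    simp only [hY, Set.indicator_apply, Set.mem_setOf_eq]
  have hint : Integrable (Y 0) ℙ := by
    rw [hYind 0]
    exact (integrable_const (1:ℝ)).indicator (hsetmeas 0)
  have hexp : ∫ ω, Y 0 ω ∂ℙ = p := by
    rw [hYind 0]
    rw [integral_indicator_const (1:ℝ) (hsetmeas 0), measureReal_def, hprob 0, smul_eq_mul, mul_one,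
      ENNReal.toReal_ofReal hp0.le]
  -- identical distribution
  have hident : ∀ i, IdentDistrib (Y i) (Y 0) ℙ ℙ := by
    intro i
    classical
    refine ⟨(hYmeas i).aemeasurable, (hYmeas 0).aemeasurable, ?_⟩
    apply Measure.ext
    intro s hs
    rw [Measure.map_apply (hYmeas i) hs, Measure.map_apply (hYmeas 0) hs]
    have hpre : ∀ j, Y j ⁻¹' s =
        ((if (1:ℝ) ∈ s then {ω | 1 ≤ X j ω} else ∅)
          ∪ (if (0:ℝ) ∈ s then {ω | 1 ≤ X j ω}ᶜ else ∅)) := by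
      intro j
      ext ω
      by_cases h1 : (1:ℝ) ∈ s <;> by_cases h0 : (0:ℝ) ∈ s <;>
        by_cases hx : 1 ≤ X j ω <;>
        simp [hY, Set.mem_preimage, h1, h0, hx]
    rw [hpre i, hpre 0]
    by_cases h1 : (1:ℝ) ∈ s <;> by_cases h0 : (0:ℝ) ∈ s <;>
      simp only [h1, h0, if_true, if_false, Set.union_empty, Set.empty_union]
    · rw [Set.union_compl_self, Set.union_compl_self]
    · rw [hprob i, hprob 0]
    · rw [measure_compl (hsetmeas i) (measure_ne_top _ _),
        measure_compl (hsetmeas 0) (measure_ne_top _ _), hprob i, hprob 0]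
  -- pairwise independence
  have hYindep : Pairwise (Function.onFun (IndepFun · · ℙ) Y) := by
    intro i j hij
    have hg : Measurable (fun k : ℕ => if 1 ≤ k then (1:ℝ) else 0) := by
      exact fun s _ => trivial
    exact (hindep.indepFun hij).comp hg hg
  have hSLLN := strong_law_ae_real Y hint hYindep hident
  rw [hexp] at hSLLN
  filter_upwards [hSLLN] with ω hω
  intro f
  -- the counting sequence
  set k : ℕ → ℝ := fun n => ((Finset.univ.filter fun i : Fin n => 1 ≤ X i ω).card : ℝ) with hk
  have hkY : ∀ n : ℕ, (∑ i ∈ Finset.range n, Y i ω) = k n := by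
    intro n
    rw [hk, ← Fin.sum_univ_eq_sum_range (fun i => Y i ω) n]
    simp only [hY]
    rw [Finset.sum_boole]
  have hkconv : Tendsto (fun n : ℕ => k n / n) atTop (nhds p) := by
    apply hω.congr
    intro n
    rw [hkY n]
  -- limit of the main term
  have hmain : Tendsto (fun n : ℕ => (k n / n) * f (-1) + (1 - k n / n) * f 0) atTop
      (nhds (p * f (-1) + (1 - p) * f 0)) := by
    exact (hkconv.mul tendsto_const_nhds).add
      ((tendsto_const_nhds.sub hkconv).mul tendsto_const_nhds)
  -- conclude via distance bound
  apply hmain.congr_dist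
  apply squeeze_zero' (Eventually.of_forall fun n => dist_nonneg)
    (g := fun n : ℕ => 4 * ‖f‖ / n)
  · filter_upwards [eventually_ge_atTop 1] with n hn
    rw [Real.dist_eq, abs_sub_comm]
    exact key_bound n hn (fun i => X i ω) f
  · exact tendsto_const_div_atTop_nhds_zero_nat _
end

section
/- Let 0 < p < 1, let n ≥ 2, and let X_1, …, X_n be i.i.d. random variables with P(X_i = 1) = p and P(X_i = 0) = 1 − p. Let A be the random n×n symmetric 0/1 matrix with A[i,j] = 1 if and only if i ≠ j and X_i + X_j ≥ 1, and let μ_n denote the mean spectral distribution, i.e., for each Borel set B ⊆ ℝ, μ_n(B) is the expectation of the empirical spectral distribution of A evaluated at B. Then for every Borel set B, μ_n(B) = (p − 1/n)·δ_{−1}(B) + (1 − p − 1/n)·δ_0(B) + (1/n)·Σ_{k=0}^{n} binom(n,k)·p^k·(1−p)^{n−k}·(δ_{λ_−(k)}(B) + δ_{λ_+(k)}(B)), where λ_±(k) = ((k−1) ± √((k−1)² + 4k(n−k)))/2. -/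
open MeasureTheory ProbabilityTheory Finset

section AuxMatrix
open Matrix Polynomial MeasureTheory

variable {α β : Type*} [Fintype α] [Fintype β] [DecidableEq α] [DecidableEq β]

lemma blockdet (x : ℝ) (hx : x ≠ 0) (hx1 : x + 1 ≠ 0) :
    x * (x + 1) * det (x • (1 : Matrix (α ⊕ β) (α ⊕ β) ℝ)
        - fromBlocks (Matrix.of fun a b : α => if a = b then (0:ℝ) else 1)
            (Matrix.of fun _ _ => 1) (Matrix.of fun _ _ => 1) 0)
      = x ^ Fintype.card β * (x + 1) ^ Fintype.card α *
        (x ^ 2 - ((Fintype.card α : ℝ) - 1) * x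
          - (Fintype.card α : ℝ) * (Fintype.card β : ℝ)) := by
  classical
  set k : ℕ := Fintype.card α
  set m : ℕ := Fintype.card β
  set A : Matrix α α ℝ := x • 1 - Matrix.of fun a b : α => if a = b then (0:ℝ) else 1 with hA
  set Bm : Matrix α β ℝ := Matrix.of fun _ _ => (-1:ℝ) with hBm
  set Cm : Matrix β α ℝ := Matrix.of fun _ _ => (-1:ℝ) with hCm
  set D : Matrix β β ℝ := x • (1 : Matrix β β ℝ) with hD
  have h1 : (x • (1 : Matrix (α ⊕ β) (α ⊕ β) ℝ)
        - fromBlocks (Matrix.of fun a b : α => if a = b then (0:ℝ) else 1)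
            (Matrix.of fun _ _ => 1) (Matrix.of fun _ _ => 1) 0)
      = fromBlocks A Bm Cm D := by
    ext i j
    rcases i with i | i <;> rcases j with j | j <;>
      simp [A, Bm, Cm, D, fromBlocks, Matrix.one_apply, Matrix.smul_apply, Matrix.sub_apply]
  haveI : Invertible D :=
    invertibleOfRightInverse _ (x⁻¹ • (1 : Matrix β β ℝ)) (by
      rw [hD, smul_mul_smul_comm, one_mul, mul_inv_cancel₀ hx, one_smul])
  have hInv : ⅟D = x⁻¹ • (1 : Matrix β β ℝ) :=
    invOf_eq_right_inv (by rw [hD, smul_mul_smul_comm, one_mul, mul_inv_cancel₀ hx, one_smul])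
  rw [h1, det_fromBlocks₂₂, hInv]
  have hdet1 : det D = x ^ m := by
    rw [hD, det_smul, det_one, mul_one]
  have hschur : (A - Bm * (x⁻¹ • (1 : Matrix β β ℝ)) * Cm)
      = (x + 1) • ((1 : Matrix α α ℝ)
          + Matrix.replicateCol (Fin 1) (fun _ : α => -(1 + (m:ℝ)/x)/(x+1))
            * Matrix.replicateRow (Fin 1) (fun _ : α => (1:ℝ))) := by
    ext i j
    simp [A, Bm, Cm, Matrix.mul_apply, Matrix.replicateCol, Matrix.replicateRow, Matrix.one_apply,
      Matrix.smul_apply, Matrix.sub_apply, Matrix.add_apply, Finset.sum_const, m]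
    by_cases h : i = j <;> simp [h] <;> field_simp <;> ring
  rw [hdet1, hschur, det_smul]
  erw [det_one_add_replicateCol_mul_replicateRow]
  have hdot : (fun _ : α => (1:ℝ)) ⬝ᵥ (fun _ : α => -(1 + (m:ℝ)/x)/(x+1))
      = (k : ℝ) * (-(1 + (m:ℝ)/x)/(x+1)) := by
    simp [dotProduct, Finset.sum_const, k]
  rw [hdot]
  field_simp
  ring

lemma my_eval_charpoly {ι : Type*} [Fintype ι] [DecidableEq ι]
    (M : Matrix ι ι ℝ) (x : ℝ) : M.charpoly.eval x = (x • 1 - M).det := by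
  have h : M.charpoly.eval x = ((charmatrix M).map (eval x)).det := by
    rw [Matrix.charpoly, ← coe_evalRingHom, RingHom.map_det]
    rfl
  rw [h]
  congr 1
  ext i j
  by_cases hij : i = j <;>
    simp [charmatrix_apply, hij, Matrix.one_apply, Matrix.smul_apply, Matrix.sub_apply]

lemma reindex_MS {n : ℕ} (S : Finset (Fin n)) :
    (Matrix.of fun i j : Fin n => if i ≠ j ∧ (i ∈ S ∨ j ∈ S) then (1:ℝ) else 0)
      = Matrix.reindex (Equiv.sumCompl (· ∈ S)) (Equiv.sumCompl (· ∈ S))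
          (fromBlocks (Matrix.of fun a b : {x // x ∈ S} => if a = b then (0:ℝ) else 1)
            (Matrix.of fun _ _ => 1) (Matrix.of fun _ _ => 1) 0) := by
  ext i j
  rw [Matrix.reindex_apply, Matrix.submatrix_apply]
  rcases h1 : (Equiv.sumCompl (· ∈ S)).symm i with a | a <;>
    rcases h2 : (Equiv.sumCompl (· ∈ S)).symm j with b | b <;>
    (have hi := congrArg (Equiv.sumCompl (· ∈ S)) h1) <;>
    (have hj := congrArg (Equiv.sumCompl (· ∈ S)) h2) <;>
    rw [Equiv.apply_symm_apply] at hi hj <;>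
    simp only [Equiv.sumCompl_apply_inl, Equiv.sumCompl_apply_inr] at hi hj <;>
    subst hi <;> subst hj
  · by_cases hab : a = b <;>
      simp [fromBlocks, hab, a.2, ← Subtype.ext_iff, Matrix.of_apply, ne_eq]
  · have : (a : Fin n) ≠ (b : Fin n) := fun h => b.2 (h ▸ a.2)
    simp [fromBlocks, this, a.2]
  · have : (a : Fin n) ≠ (b : Fin n) := fun h => a.2 (h ▸ b.2)
    simp [fromBlocks, this, b.2]
  · by_cases hab : a = b
    · simp [fromBlocks, hab]
    · have : (a : Fin n) ≠ (b : Fin n) := fun h => hab (Subtype.ext h)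
      simp [fromBlocks, this, a.2, b.2]

lemma charpoly_MS {n : ℕ} (S : Finset (Fin n)) :
    X * (X + C 1) * (Matrix.of fun i j : Fin n =>
        if i ≠ j ∧ (i ∈ S ∨ j ∈ S) then (1:ℝ) else 0).charpoly
      = X ^ (n - S.card) * (X + C 1) ^ S.card *
        (X ^ 2 - C ((S.card : ℝ) - 1) * X - C ((S.card : ℝ) * ((n:ℝ) - S.card))) := by
  classical
  have hcp : (Matrix.of fun i j : Fin n =>
        if i ≠ j ∧ (i ∈ S ∨ j ∈ S) then (1:ℝ) else 0).charpoly
      = (fromBlocks (Matrix.of fun a b : {x // x ∈ S} => if a = b then (0:ℝ) else 1)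
            (Matrix.of fun (_ : {x // x ∈ S}) (_ : {x : Fin n // ¬ x ∈ S}) => (1:ℝ))
            (Matrix.of fun (_ : {x : Fin n // ¬ x ∈ S}) (_ : {x // x ∈ S}) => (1:ℝ))
            0).charpoly := by
    rw [reindex_MS S, Matrix.charpoly_reindex]
  have hk : Fintype.card {x : Fin n // x ∈ S} = S.card := Fintype.card_coe S
  have hcard : S.card ≤ n := by
    simpa using Finset.card_le_univ S
  have hm : Fintype.card {x : Fin n // ¬ x ∈ S} = n - S.card := by
    rw [Fintype.card_subtype_compl]
    simp [hk]
  rw [hcp, ← sub_eq_zero]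
  apply Polynomial.eq_zero_of_infinite_isRoot
  apply Set.Infinite.mono (s := ({0, -1} : Set ℝ)ᶜ)
  · intro x hx
    simp only [Set.mem_compl_iff, Set.mem_insert_iff, Set.mem_singleton_iff, not_or] at hx
    obtain ⟨hx0, hx1⟩ := hx
    have hx1' : x + 1 ≠ 0 := by
      intro h; apply hx1; linarith
    have hb := blockdet (α := {x : Fin n // x ∈ S}) (β := {x : Fin n // ¬ x ∈ S}) x hx0 hx1'
    rw [hk, hm] at hb
    simp only [Set.mem_setOf_eq, IsRoot, eval_sub, eval_mul, eval_pow, eval_add, eval_X,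
      eval_C, eval_sub, my_eval_charpoly]
    rw [sub_eq_zero, hb]
    congr 1
    push_cast [hcard]
    ring
  · exact Set.Finite.infinite_compl (by simp)

lemma roots_MS {n : ℕ} (hn : 1 ≤ n) (S : Finset (Fin n)) :
    ({0} : Multiset ℝ) + {-1} + (Matrix.of fun i j : Fin n =>
        if i ≠ j ∧ (i ∈ S ∨ j ∈ S) then (1:ℝ) else 0).charpoly.roots
      = (n - S.card) • {0} + S.card • {-1}
        + {(((S.card:ℝ) - 1) - Real.sqrt (((S.card:ℝ) - 1)^2 + 4*S.card*((n:ℝ) - S.card)))/2,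
           (((S.card:ℝ) - 1) + Real.sqrt (((S.card:ℝ) - 1)^2 + 4*S.card*((n:ℝ) - S.card)))/2} := by
  classical
  have hcard : S.card ≤ n := by simpa using Finset.card_le_univ S
  set k : ℕ := S.card
  set lm : ℝ := (((k:ℝ) - 1) - Real.sqrt (((k:ℝ) - 1)^2 + 4*k*((n:ℝ) - k)))/2 with hlm
  set lp : ℝ := (((k:ℝ) - 1) + Real.sqrt (((k:ℝ) - 1)^2 + 4*k*((n:ℝ) - k)))/2 with hlp
  have hd : (0:ℝ) ≤ ((k:ℝ) - 1)^2 + 4*k*((n:ℝ) - k) := by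
    have h1 : (0:ℝ) ≤ ((k:ℝ) - 1)^2 := sq_nonneg _
    have h2 : (k:ℝ) ≤ (n:ℝ) := by exact_mod_cast hcard
    have h3 : (0:ℝ) ≤ 4*k*((n:ℝ) - k) :=
      mul_nonneg (by positivity) (by linarith)
    linarith
  have hs : Real.sqrt (((k:ℝ) - 1)^2 + 4*k*((n:ℝ) - k)) ^ 2
      = ((k:ℝ) - 1)^2 + 4*k*((n:ℝ) - k) := Real.sq_sqrt hd
  have hquad : (X ^ 2 - C ((k : ℝ) - 1) * X - C ((k : ℝ) * ((n:ℝ) - k)))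
      = (X - C lm) * (X - C lp) := by
    have h1 : lm + lp = (k:ℝ) - 1 := by rw [hlm, hlp]; ring
    have h2 : lm * lp = -((k:ℝ) * ((n:ℝ) - k)) := by
      rw [hlm, hlp]
      have : ((((k:ℝ) - 1) - Real.sqrt (((k:ℝ) - 1)^2 + 4*k*((n:ℝ) - k)))/2) *
          ((((k:ℝ) - 1) + Real.sqrt (((k:ℝ) - 1)^2 + 4*k*((n:ℝ) - k)))/2)
          = (((k:ℝ) - 1)^2 - Real.sqrt (((k:ℝ) - 1)^2 + 4*k*((n:ℝ) - k)) ^ 2) / 4 := by ring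
      rw [this, hs]; ring
    have expand : (X - C lm) * (X - C lp)
        = X ^ 2 - (C lm + C lp) * X + C lm * C lp := by ring
    rw [expand, ← C_add, ← C_mul, h1, h2, map_neg]
    ring
  have hXC : (X + C (1:ℝ)) = X - C (-1) := by
    rw [map_neg, sub_neg_eq_add]
  have hcpne : (Matrix.of fun i j : Fin n =>
      if i ≠ j ∧ (i ∈ S ∨ j ∈ S) then (1:ℝ) else 0).charpoly ≠ 0 :=
    (Matrix.charpoly_monic _).ne_zero
  have hXne : (X : ℝ[X]) ≠ 0 := X_ne_zero
  have hXCne : (X + C (1:ℝ)) ≠ 0 := by rw [hXC]; exact X_sub_C_ne_zero _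
  have hquadne : (X ^ 2 - C ((k : ℝ) - 1) * X - C ((k : ℝ) * ((n:ℝ) - k))) ≠ 0 := by
    rw [hquad]
    exact mul_ne_zero (X_sub_C_ne_zero _) (X_sub_C_ne_zero _)
  have hL := congrArg Polynomial.roots (charpoly_MS S)
  rw [roots_mul (mul_ne_zero (mul_ne_zero hXne hXCne) hcpne),
      roots_mul (mul_ne_zero hXne hXCne),
      roots_mul (mul_ne_zero (mul_ne_zero (pow_ne_zero _ hXne) (pow_ne_zero _ hXCne)) hquadne),
      roots_mul (mul_ne_zero (pow_ne_zero _ hXne) (pow_ne_zero _ hXCne)),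
      roots_pow, roots_pow, roots_X, hXC, roots_X_sub_C, hquad,
      roots_mul (mul_ne_zero (X_sub_C_ne_zero _) (X_sub_C_ne_zero _)),
      roots_X_sub_C, roots_X_sub_C] at hL
  rw [hL]
  rfl

lemma multiset_meas_sum_apply (s : Multiset (Measure ℝ)) (B : Set ℝ) :
    s.sum B = (s.map (fun μ => μ B)).sum := by
  induction s using Multiset.induction_on with
  | empty => simp
  | cons a s ih => simp [Measure.add_apply, ih]

lemma multiset_sum_ne_top (s : Multiset ENNReal) (h : ∀ a ∈ s, a ≠ ⊤) : s.sum ≠ ⊤ := by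
  induction s using Multiset.induction_on with
  | empty => simp
  | cons a s ih =>
      rw [Multiset.sum_cons]
      exact ENNReal.add_ne_top.mpr ⟨h a (Multiset.mem_cons_self a s),
        ih (fun b hb => h b (Multiset.mem_cons_of_mem hb))⟩

lemma multiset_toReal_sum (s : Multiset ENNReal) (h : ∀ a ∈ s, a ≠ ⊤) :
    s.sum.toReal = (s.map ENNReal.toReal).sum := by
  induction s using Multiset.induction_on with
  | empty => simp
  | cons a s ih =>
      have ha : a ≠ ⊤ := h a (Multiset.mem_cons_self a s)
      have hs : s.sum ≠ ⊤ := multiset_sum_ne_top s (fun b hb => h b (Multiset.mem_cons_of_mem hb))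
      simp [ENNReal.toReal_add ha hs, ih (fun b hb => h b (Multiset.mem_cons_of_mem hb))]

lemma esd_apply {n : ℕ} (hn : 2 ≤ n) (S : Finset (Fin n)) (B : Set ℝ) :
    ((esd (Matrix.of fun i j : Fin n =>
        if i ≠ j ∧ (i ∈ S ∨ j ∈ S) then (1:ℝ) else 0)) B).toReal
      = (1/(n:ℝ)) * ( ((S.card:ℝ) - 1) * (Measure.dirac (-1:ℝ) B).toReal
          + ((n:ℝ) - S.card - 1) * (Measure.dirac (0:ℝ) B).toReal
          + (Measure.dirac ((((S.card:ℝ) - 1)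
              - Real.sqrt (((S.card:ℝ) - 1)^2 + 4*S.card*((n:ℝ) - S.card)))/2) B).toReal
          + (Measure.dirac ((((S.card:ℝ) - 1)
              + Real.sqrt (((S.card:ℝ) - 1)^2 + 4*S.card*((n:ℝ) - S.card)))/2) B).toReal ) := by
  classical
  have hcard : S.card ≤ n := by simpa using Finset.card_le_univ S
  set g : ℝ → ℝ := fun x => (Measure.dirac x B).toReal with hg
  set R := (Matrix.of fun i j : Fin n =>
      if i ≠ j ∧ (i ∈ S ∨ j ∈ S) then (1:ℝ) else 0).charpoly.roots with hR
  -- value of esd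
  have h1 : ((esd (Matrix.of fun i j : Fin n =>
      if i ≠ j ∧ (i ∈ S ∨ j ∈ S) then (1:ℝ) else 0)) B).toReal
      = (1/(n:ℝ)) * (R.map g).sum := by
    rw [esd, Measure.smul_apply, smul_eq_mul, ENNReal.toReal_mul,
      multiset_meas_sum_apply]
    congr 1
    · simp [ENNReal.toReal_inv]
    · rw [multiset_toReal_sum _ (by
        intro a ha
        simp only [Multiset.mem_map] at ha
        obtain ⟨μ, hμ, rfl⟩ := ha
        obtain ⟨l, hl, rfl⟩ := hμ
        exact measure_ne_top _ B), Multiset.map_map, Multiset.map_map]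
      rfl
  rw [h1]
  -- use the multiset identity
  have h2 := congrArg (fun s : Multiset ℝ => ((s.map g).sum : ℝ)) (roots_MS (by omega) S)
  simp only [Multiset.map_add, Multiset.sum_add, Multiset.map_nsmul, Multiset.sum_nsmul,
    Multiset.map_singleton, Multiset.sum_singleton, Multiset.insert_eq_cons,
    Multiset.map_cons, Multiset.sum_cons, nsmul_eq_mul] at h2
  have hnk : ((n - S.card : ℕ) : ℝ) = (n:ℝ) - S.card := by
    exact Nat.cast_sub hcard
  rw [hnk] at h2
  have : (R.map g).sum = ((n:ℝ) - S.card) * g 0 + (S.card:ℝ) * g (-1)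
      + g ((((S.card:ℝ) - 1) - Real.sqrt (((S.card:ℝ) - 1)^2 + 4*S.card*((n:ℝ) - S.card)))/2)
      + g ((((S.card:ℝ) - 1) + Real.sqrt (((S.card:ℝ) - 1)^2 + 4*S.card*((n:ℝ) - S.card)))/2)
      - g 0 - g (-1) := by
    rw [← hR] at h2
    linarith [h2]
  rw [this, hg]
  ring

end AuxMatrix

lemma binom_S0 (n : ℕ) {p q : ℝ} (h : p + q = 1) :
    ∑ k ∈ Finset.range (n+1), (n.choose k : ℝ) * p^k * q^(n-k) = 1 := by
  have h2 := add_pow p q n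
  rw [h, one_pow] at h2
  rw [h2]
  exact Finset.sum_congr rfl fun k _ => by ring

lemma binom_S1 (n : ℕ) (hn : 1 ≤ n) {p q : ℝ} (h : p + q = 1) :
    ∑ k ∈ Finset.range (n+1), (k:ℝ) * ((n.choose k : ℝ) * p^k * q^(n-k)) = n * p := by
  obtain ⟨m, rfl⟩ : ∃ m, n = m + 1 := ⟨n - 1, by omega⟩
  rw [Finset.sum_range_succ']
  simp only [Nat.cast_zero, zero_mul, add_zero]
  have hkey : ∀ k : ℕ, (k+1 : ℕ) * ((m+1).choose (k+1)) = (m+1) * (m.choose k) := by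
    intro k
    have h1 := Nat.add_one_mul_choose_eq m k
    rw [mul_comm ((m+1).choose (k+1)) (k+1)] at h1
    exact h1.symm
  have hsub : ∀ k : ℕ, (m+1) - (k+1) = m - k := fun k => by omega
  calc ∑ k ∈ Finset.range (m+1), ((k+1 : ℕ):ℝ) * (((m+1).choose (k+1) : ℝ) * p^(k+1) * q^((m+1)-(k+1)))
      = ∑ k ∈ Finset.range (m+1), ((m+1):ℝ) * p * ((m.choose k : ℝ) * p^k * q^(m-k)) := by
        apply Finset.sum_congr rfl
        intro k _
        rw [hsub k]
        have hc : ((k:ℝ)+1) * (((m+1).choose (k+1) : ℝ)) = ((m:ℝ)+1) * (m.choose k : ℝ) := by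
          exact_mod_cast hkey k
        push_cast
        linear_combination (p^(k+1) * q^(m-k)) * hc
    _ = ((m+1):ℝ) * p * ∑ k ∈ Finset.range (m+1), ((m.choose k : ℝ) * p^k * q^(m-k)) := by
        rw [Finset.mul_sum]
    _ = ((m+1):ℕ) * p := by
        rw [binom_S0 m h]
        push_cast
        ring

lemma final_algebra (n : ℕ) (hn : 2 ≤ n) (p a b : ℝ) (c d : ℕ → ℝ) :
    ∑ k ∈ Finset.range (n+1), (n.choose k : ℝ) * (p^k * (1-p)^(n-k) *
        ((1/(n:ℝ)) * (((k:ℝ) - 1) * a + ((n:ℝ) - k - 1) * b + c k + d k)))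
      = (p - 1/n) * a + (1 - p - 1/n) * b
        + (1/n) * ∑ k ∈ Finset.range (n+1),
            (n.choose k : ℝ) * p^k * (1-p)^(n-k) * (c k + d k) := by
  have hn0 : (n:ℝ) ≠ 0 := by positivity
  have hpq : p + (1-p) = 1 := by ring
  have hS0 := binom_S0 n hpq
  have hS1 := binom_S1 n (by omega) hpq
  have expand : ∀ k ∈ Finset.range (n+1),
      (n.choose k : ℝ) * (p^k * (1-p)^(n-k) *
        ((1/(n:ℝ)) * (((k:ℝ) - 1) * a + ((n:ℝ) - k - 1) * b + c k + d k)))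
      = (a/n - b/n) * ((k:ℝ) * ((n.choose k : ℝ) * p^k * (1-p)^(n-k)))
        + (b - a/n - b/n) * ((n.choose k : ℝ) * p^k * (1-p)^(n-k))
        + (1/(n:ℝ)) * ((n.choose k : ℝ) * p^k * (1-p)^(n-k) * (c k + d k)) := by
    intro k _
    field_simp
    ring
  rw [Finset.sum_congr rfl expand]
  rw [Finset.sum_add_distrib, Finset.sum_add_distrib, ← Finset.mul_sum, ← Finset.mul_sum,
    ← Finset.mul_sum, hS1, hS0]
  field_simp
  ring

/-- the mean spectral distribution of the binary threshold model `G_n(p)`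
(i.i.d. Bernoulli(p) hidden variables `X_1, …, X_n`, vertices `i ≠ j` adjacent iff
`X_i + X_j ≥ 1`) is, on every Borel set `B`,
`(p - 1/n)·δ_{-1}(B) + (1 - p - 1/n)·δ_0(B)
  + (1/n)·Σ_{k=0}^n binom(n,k) p^k (1-p)^{n-k} (δ_{λ₋(k)}(B) + δ_{λ₊(k)}(B))`
where `λ±(k) = ((k-1) ± √((k-1)² + 4k(n-k)))/2`. -/
theorem binaryThresholdModel_mean_esd
    {Ω : Type*} [MeasureSpace Ω] [IsProbabilityMeasure (ℙ : Measure Ω)]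
    (p : ℝ) (hp0 : 0 < p) (hp1 : p < 1) (n : ℕ) (hn : 2 ≤ n)
    (X : Fin n → Ω → ℕ)
    (hmeas : ∀ i, Measurable (X i))
    (hindep : iIndepFun X ℙ)
    (hdist : ∀ i, ℙ {ω | X i ω = 1} = ENNReal.ofReal p ∧
                  ℙ {ω | X i ω = 0} = ENNReal.ofReal (1 - p)) :
    ∀ B : Set ℝ, MeasurableSet B →
      (∫ ω, ((esd (Matrix.of fun i j : Fin n =>
          if i ≠ j ∧ 1 ≤ X i ω + X j ω then (1 : ℝ) else 0)) B).toReal ∂ℙ) =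
        (p - 1 / n) * ((Measure.dirac (-1 : ℝ)) B).toReal
        + (1 - p - 1 / n) * ((Measure.dirac (0 : ℝ)) B).toReal
        + (1 / n) * ∑ k ∈ Finset.range (n + 1),
            (n.choose k : ℝ) * p ^ k * (1 - p) ^ (n - k) *
              (((Measure.dirac ((((k : ℝ) - 1) -
                  Real.sqrt (((k : ℝ) - 1) ^ 2 + 4 * k * ((n : ℝ) - k))) / 2)) B).toReal
               + ((Measure.dirac ((((k : ℝ) - 1) +
                  Real.sqrt (((k : ℝ) - 1) ^ 2 + 4 * k * ((n : ℝ) - k))) / 2)) B).toReal) := by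
  intro B hB
  classical
  set a : ℝ := (Measure.dirac (-1 : ℝ) B).toReal with ha
  set b : ℝ := (Measure.dirac (0 : ℝ) B).toReal with hb
  have hq0 : (0:ℝ) ≤ 1 - p := by linarith
  set c : ℕ → ℝ := fun k => (Measure.dirac ((((k:ℝ) - 1)
      - Real.sqrt (((k:ℝ) - 1)^2 + 4*k*((n:ℝ) - k)))/2) B).toReal with hc
  set d : ℕ → ℝ := fun k => (Measure.dirac ((((k:ℝ) - 1)
      + Real.sqrt (((k:ℝ) - 1)^2 + 4*k*((n:ℝ) - k)))/2) B).toReal with hd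
  set f : ℕ → ℝ := fun k =>
    (1/(n:ℝ)) * (((k:ℝ) - 1) * a + ((n:ℝ) - k - 1) * b + c k + d k) with hf
  -- the per-ω value of the esd
  have hpt : ∀ ω : Ω, ((esd (Matrix.of fun i j : Fin n =>
      if i ≠ j ∧ 1 ≤ X i ω + X j ω then (1 : ℝ) else 0)) B).toReal
      = f (Finset.univ.filter fun i => 1 ≤ X i ω).card := by
    intro ω
    have hmx : (Matrix.of fun i j : Fin n =>
        if i ≠ j ∧ 1 ≤ X i ω + X j ω then (1 : ℝ) else 0)
        = (Matrix.of fun i j : Fin n =>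
            if i ≠ j ∧ (i ∈ (Finset.univ.filter fun i => 1 ≤ X i ω)
              ∨ j ∈ (Finset.univ.filter fun i => 1 ≤ X i ω)) then (1:ℝ) else 0) := by
      ext i j
      simp only [Matrix.of_apply, Finset.mem_filter, Finset.mem_univ, true_and]
      refine if_congr (and_congr_right fun _ => ?_) rfl rfl
      omega
    rw [hmx, hf]
    simp only [hc, hd]
    exact esd_apply hn _ B
  -- the events
  set E : Finset (Fin n) → Set Ω := fun T => ⋂ i, X i ⁻¹' {if i ∈ T then 1 else 0} with hE
  have hEmeas : ∀ T, MeasurableSet (E T) :=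
    fun T => MeasurableSet.iInter fun i => hmeas i (measurableSet_singleton _)
  have hEP : ∀ T : Finset (Fin n),
      ℙ (E T) = ENNReal.ofReal p ^ T.card * ENNReal.ofReal (1-p) ^ (n - T.card) := by
    intro T
    rw [hE]
    rw [hindep.meas_iInter (fun i => ⟨{if i ∈ T then 1 else 0}, measurableSet_singleton _, rfl⟩)]
    have hfac : ∀ i, ℙ (X i ⁻¹' {if i ∈ T then 1 else 0})
        = if i ∈ T then ENNReal.ofReal p else ENNReal.ofReal (1-p) := by
      intro i
      by_cases hiT : i ∈ T
      · simp only [hiT, if_true]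
        exact (hdist i).1
      · simp only [hiT, if_false]
        exact (hdist i).2
    rw [Finset.prod_congr rfl (fun i _ => hfac i),
      ← Finset.prod_filter_mul_prod_filter_not Finset.univ (· ∈ T),
      Finset.prod_congr rfl (fun i hi => if_pos (Finset.mem_filter.mp hi).2),
      Finset.prod_congr rfl (fun i hi => if_neg (Finset.mem_filter.mp hi).2),
      Finset.prod_const, Finset.prod_const, Finset.filter_univ_mem]
    congr 2
    have h1 : Finset.univ.filter (fun i => ¬ i ∈ T) = Tᶜ := by
      ext i; simp
    rw [h1, Finset.card_compl]
    simp
  -- null set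
  have hN : ℙ (⋃ i, {ω | ¬ (X i ω = 0 ∨ X i ω = 1)}) = 0 := by
    apply measure_iUnion_null
    intro i
    have hdisj : Disjoint {ω | X i ω = 0} {ω | X i ω = 1} := by
      rw [Set.disjoint_left]
      intro ω h0 h1
      simp only [Set.mem_setOf_eq] at h0 h1
      omega
    have hu : ℙ ({ω | X i ω = 0} ∪ {ω | X i ω = 1}) = 1 := by
      rw [measure_union hdisj (hmeas i (measurableSet_singleton 1)),
        (hdist i).1, (hdist i).2, ← ENNReal.ofReal_add hq0 hp0.le]
      norm_num
    have hcm : {ω | ¬ (X i ω = 0 ∨ X i ω = 1)} = ({ω | X i ω = 0} ∪ {ω | X i ω = 1})ᶜ := by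
      ext ω; simp [not_or]
    rw [hcm]
    exact (prob_compl_eq_zero_iff ((hmeas i (measurableSet_singleton 0)).union
      (hmeas i (measurableSet_singleton 1)))).mpr hu
  -- a.e. equality with a simple function
  have hae : ∀ᵐ ω ∂(ℙ : Measure Ω), ∀ i, X i ω = 0 ∨ X i ω = 1 := by
    rw [MeasureTheory.ae_iff]
    apply measure_mono_null _ hN
    intro ω hω
    simp only [Set.mem_setOf_eq, not_forall] at hω
    obtain ⟨i, hi⟩ := hω
    exact Set.mem_iUnion.mpr ⟨i, hi⟩
  have haeq : (fun ω => f ((Finset.univ.filter fun i => 1 ≤ X i ω).card))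
      =ᵐ[(ℙ : Measure Ω)] (fun ω => ∑ T : Finset (Fin n),
        (E T).indicator (fun _ => f T.card) ω) := by
    filter_upwards [hae] with ω hω
    set T₀ := Finset.univ.filter (fun i => X i ω = 1) with hT₀
    have hfil : Finset.univ.filter (fun i => 1 ≤ X i ω) = T₀ := by
      apply Finset.filter_congr
      intro i _
      rcases hω i with h | h <;> simp [h]
    have hmem : ω ∈ E T₀ := by
      rw [hE]
      refine Set.mem_iInter.mpr fun i => ?_
      simp only [Set.mem_preimage, Set.mem_singleton_iff]
      by_cases hi : i ∈ T₀
      · rw [if_pos hi]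
        exact (Finset.mem_filter.mp hi).2
      · rw [if_neg hi]
        have h1 : X i ω ≠ 1 := fun h => hi (Finset.mem_filter.mpr ⟨Finset.mem_univ i, h⟩)
        rcases hω i with h | h
        · exact h
        · exact absurd h h1
    rw [hfil, Finset.sum_eq_single T₀]
    · rw [Set.indicator_of_mem hmem]
    · intro T _ hT
      apply Set.indicator_of_notMem
      intro hmem'
      apply hT
      ext i
      have h1 := Set.mem_iInter.mp hmem' i
      simp only [Set.mem_preimage, Set.mem_singleton_iff] at h1
      constructor
      · intro hi
        rw [if_pos hi] at h1
        exact Finset.mem_filter.mpr ⟨Finset.mem_univ i, h1⟩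
      · intro hi
        by_contra hiT
        rw [if_neg hiT] at h1
        have h2 := (Finset.mem_filter.mp hi).2
        omega
    · intro h
      exact absurd (Finset.mem_univ T₀) h
  -- compute the integral
  have hint : (∫ ω, ((esd (Matrix.of fun i j : Fin n =>
      if i ≠ j ∧ 1 ≤ X i ω + X j ω then (1 : ℝ) else 0)) B).toReal ∂ℙ)
      = ∑ T : Finset (Fin n), ((ℙ (E T)).toReal • f T.card) := by
    rw [integral_congr_ae ((Filter.EventuallyEq.of_eq (funext hpt)).trans haeq),
      integral_finset_sum _ (fun T _ => (integrable_const (f T.card)).indicator (hEmeas T))]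
    exact Finset.sum_congr rfl fun T _ => integral_indicator_const _ (hEmeas T)
  rw [hint]
  have hterm : ∀ T : Finset (Fin n), (ℙ (E T)).toReal • f T.card
      = p ^ T.card * (1-p) ^ (n - T.card) * f T.card := by
    intro T
    rw [hEP T, smul_eq_mul, ENNReal.toReal_mul, ENNReal.toReal_pow, ENNReal.toReal_pow,
      ENNReal.toReal_ofReal hp0.le, ENNReal.toReal_ofReal hq0]
  rw [Finset.sum_congr rfl fun T _ => hterm T, ← Finset.powerset_univ,
    Finset.sum_powerset_apply_card (fun k => p ^ k * (1-p) ^ (n - k) * f k)]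
  have hcard : (Finset.univ : Finset (Fin n)).card = n := by
    simp
  rw [hcard]
  have hstep : ∀ k ∈ Finset.range (n+1),
      n.choose k • (p ^ k * (1-p) ^ (n - k) * f k)
      = (n.choose k : ℝ) * (p ^ k * (1-p) ^ (n-k) *
          ((1/(n:ℝ)) * (((k:ℝ) - 1) * a + ((n:ℝ) - k - 1) * b + c k + d k))) := by
    intro k _
    rw [nsmul_eq_mul, hf]
  rw [Finset.sum_congr rfl hstep]
  exact final_algebra n hn p a b c d
end
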